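/- arXiv:1705.05576 — 4 statements merged into one kernel-verified Lean document; each statement's English description precedes it below -/
import Mathlib

section
/- Let X be a complex Banach space, 1 ≤ p < ∞, and {M_k}_{k∈ℤ} a sequence of bounded linear operators on X. Then the following are equivalent: (i) for each f ∈ L^p(𝕋;X) there exists u ∈ H^{1,p}(𝕋;X) such that û(k) = M_k f̂(k) for all k ∈ ℤ (i.e. {M_k} is an (L^p, H^{1,p})-multiplier); (ii) {ik M_k}_{k∈ℤ} is an L^p-multiplier. -/
open MeasureTheory Real Complex Filter Finset intervalIntegral
open scoped ENNReal NNReal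

noncomputable section

/-- `f` represents an element of `L^p(𝕋; X)`: it is `2π`-periodic and
`p`-integrable over one period `(0, 2π]`. -/
def PeriodicLp {X : Type*} [NormedAddCommGroup X] (p : ℝ≥0∞) (f : ℝ → X) : Prop :=
  Function.Periodic f (2 * Real.pi) ∧
    MeasureTheory.MemLp f p (MeasureTheory.volume.restrict (Set.Ioc 0 (2 * Real.pi)))

/-- The `k`-th Fourier coefficient `f̂(k) = (1/(2π)) ∫₀^{2π} e^{-iks} f(s) ds`. -/
def fourierCoef {X : Type*} [NormedAddCommGroup X] [NormedSpace ℂ X] (f : ℝ → X) (k : ℤ) : X :=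
  (1 / (2 * (Real.pi : ℂ))) •
    ∫ s in (0:ℝ)..(2 * Real.pi), Complex.exp (-Complex.I * (k : ℂ) * (s : ℂ)) • f s

/-- A family `T ⊆ B(X, Y)` of bounded operators is `R`-bounded: there are `C > 0` and
`q ∈ [1, ∞)` such that for all `m`, all `T₁, …, T_m ∈ T` and `x₁, …, x_m ∈ X`,
`(2^{-m} Σ_{ε ∈ {-1,1}^m} ‖Σ_j ε_j T_j x_j‖^q)^{1/q} ≤
 C (2^{-m} Σ_{ε ∈ {-1,1}^m} ‖Σ_j ε_j x_j‖^q)^{1/q}`, where signs `ε ∈ {-1,1}^m` are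
encoded by maps `Fin m → Bool`. -/
def RBounded {X Y : Type*} [NormedAddCommGroup X] [NormedSpace ℂ X]
    [NormedAddCommGroup Y] [NormedSpace ℂ Y] (T : Set (X →L[ℂ] Y)) : Prop :=
  ∃ C q : ℝ, 0 < C ∧ 1 ≤ q ∧
    ∀ (m : ℕ) (Ts : Fin m → (X →L[ℂ] Y)) (x : Fin m → X), (∀ j, Ts j ∈ T) →
      (((2:ℝ)⁻¹) ^ m * ∑ ε : Fin m → Bool,
          ‖∑ j, (if ε j then (1:ℝ) else -1) • Ts j (x j)‖ ^ q) ^ (1/q) ≤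
      C * ((((2:ℝ)⁻¹) ^ m * ∑ ε : Fin m → Bool,
          ‖∑ j, (if ε j then (1:ℝ) else -1) • x j‖ ^ q) ^ (1/q))

/-- `{M_k}_{k ∈ ℤ}` is an `L^p`-multiplier: for each `f ∈ L^p(𝕋; X)` there is
`u ∈ L^p(𝕋; Y)` with `û(k) = M_k f̂(k)` for all `k`. -/
def IsLpMultiplier {X Y : Type*} [NormedAddCommGroup X] [NormedSpace ℂ X]
    [NormedAddCommGroup Y] [NormedSpace ℂ Y] (p : ℝ≥0∞) (M : ℤ → (X →L[ℂ] Y)) : Prop :=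
  ∀ f : ℝ → X, PeriodicLp p f →
    ∃ u : ℝ → Y, PeriodicLp p u ∧ ∀ k : ℤ, fourierCoef u k = M k (fourierCoef f k)

/-- `u` represents an element of `H^{1,p}(𝕋; X)`: `u ∈ L^p(𝕋; X)` and there is
`v ∈ L^p(𝕋; X)` with `v̂(k) = ik û(k)` for all `k`. -/
def MemH1p {X : Type*} [NormedAddCommGroup X] [NormedSpace ℂ X] (p : ℝ≥0∞) (u : ℝ → X) : Prop :=
  PeriodicLp p u ∧ ∃ v : ℝ → X, PeriodicLp p v ∧
    ∀ k : ℤ, fourierCoef v k = (Complex.I * (k : ℂ)) • fourierCoef u k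

/-- The (possibly unbounded) linear operator `A` with domain `D` is closed. -/
def IsClosedOp {X : Type*} [NormedAddCommGroup X] [NormedSpace ℂ X]
    (D : Submodule ℂ X) (A : D →ₗ[ℂ] X) : Prop :=
  ∀ (x : ℕ → D) (a b : X),
    Filter.Tendsto (fun m => (x m : X)) Filter.atTop (nhds a) →
    Filter.Tendsto (fun m => A (x m)) Filter.atTop (nhds b) →
    ∃ ha : a ∈ D, A ⟨a, ha⟩ = b

/-- `x` is a `2π`-periodic strong `L^p`-solution of
`x′(t) = A x(t) + Σ_{j=1}^n B x(t - r_j) + f(t)`, `x(0) = x(2π)`: it belongs to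
`H^{1,p}(𝕋; X)` (with `v` playing the role of `x′`), `x(t) ∈ D(A)` a.e. and the
equation holds almost everywhere on a period. -/
def IsStrongSolution {X : Type*} [NormedAddCommGroup X] [NormedSpace ℂ X]
    (p : ℝ≥0∞) (D : Submodule ℂ X) (A : D →ₗ[ℂ] X) (B : X →L[ℂ] X)
    {n : ℕ} (r : Fin n → ℝ) (f : ℝ → X) (x : ℝ → X) : Prop :=
  PeriodicLp p x ∧
  ∃ v : ℝ → X, PeriodicLp p v ∧
    (∀ k : ℤ, fourierCoef v k = (Complex.I * (k : ℂ)) • fourierCoef x k) ∧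
    ∀ᵐ t ∂(MeasureTheory.volume.restrict (Set.Ioc 0 (2 * Real.pi))),
      ∃ hx : x t ∈ D, v t = A ⟨x t, hx⟩ + (∑ j, B (x (t - r j))) + f t


-- helpers

lemma my_twopi_pos : (0:ℝ) < 2 * Real.pi := by positivity

lemma my_twopi_ne : (2 * (Real.pi : ℂ)) ≠ 0 := by
  simp [Real.pi_ne_zero, Complex.ext_iff]

lemma my_periodic_intervalIntegrable {X : Type*} [NormedAddCommGroup X]
    {f : ℝ → X} {T : ℝ} (hT : 0 < T) (hper : Function.Periodic f T)
    (h : IntervalIntegrable f volume 0 T) :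
    ∀ a b : ℝ, IntervalIntegrable f volume a b := by
  have hseg : ∀ n : ℤ, IntervalIntegrable f volume (n * T) (n * T + T) := by
    intro n
    have h2 := h.comp_sub_right (n * T)
    have hfun : (fun x => f (x - n * T)) = f := funext fun x => hper.sub_int_mul_eq n
    rw [hfun] at h2
    simpa [add_comm] using h2
  have H : ∀ n : ℕ, IntervalIntegrable f volume (-(n * T)) (n * T) := by
    intro n
    induction n with
    | zero => simp
    | succ n ih =>
      have hL := hseg (-(n + 1) : ℤ)
      have hR := hseg (n : ℤ)
      have eL1 : ((-(n + 1) : ℤ) : ℝ) * T = -(((n : ℕ) + 1 : ℝ) * T) := by push_cast; ring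
      have eL2 : ((-(n + 1) : ℤ) : ℝ) * T + T = -((n : ℝ) * T) := by push_cast; ring
      have eR1 : ((n : ℤ) : ℝ) * T = (n : ℝ) * T := by push_cast; ring
      have eR2 : ((n : ℤ) : ℝ) * T + T = ((n : ℕ) + 1 : ℝ) * T := by push_cast; ring
      rw [eL2, eL1] at hL
      rw [eR2, eR1] at hR
      push_cast
      exact (hL.trans ih).trans hR
  intro a b
  obtain ⟨n, hn⟩ := exists_nat_ge (max |a| |b| / T)
  have hnT : max |a| |b| ≤ n * T := (div_le_iff₀ hT).1 hn
  have ha : a ∈ Set.uIcc (-(n * T : ℝ)) (n * T) := by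
    rw [Set.uIcc_of_le (by nlinarith [abs_nonneg a, le_trans (abs_nonneg a) ((le_max_left _ _).trans hnT)])]
    constructor
    · nlinarith [neg_abs_le a, (le_max_left |a| |b|).trans hnT]
    · nlinarith [le_abs_self a, (le_max_left |a| |b|).trans hnT]
  have hb : b ∈ Set.uIcc (-(n * T : ℝ)) (n * T) := by
    rw [Set.uIcc_of_le (by nlinarith [le_trans (abs_nonneg a) ((le_max_left _ _).trans hnT)])]
    constructor
    · nlinarith [neg_abs_le b, (le_max_right |a| |b|).trans hnT]
    · nlinarith [le_abs_self b, (le_max_right |a| |b|).trans hnT]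
  exact (H n).mono_set (Set.uIcc_subset_uIcc ha hb)

instance my_finite : IsFiniteMeasure (volume.restrict (Set.Ioc (0:ℝ) (2 * Real.pi))) :=
  ⟨by rw [Measure.restrict_apply_univ]; exact measure_Ioc_lt_top⟩

lemma my_continuous_memLp {X : Type*} [NormedAddCommGroup X]
    {g : ℝ → X} (hg : Continuous g) (p : ℝ≥0∞) :
    MemLp g p (volume.restrict (Set.Ioc 0 (2 * Real.pi))) := by
  obtain ⟨C, hC⟩ := (isCompact_Icc (a := (0:ℝ)) (b := 2 * Real.pi)).exists_bound_of_continuousOn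
    hg.continuousOn
  refine (memLp_top_of_bound hg.aestronglyMeasurable.restrict C ?_).mono_exponent le_top
  exact (ae_restrict_iff' measurableSet_Ioc).2
    (Eventually.of_forall fun t ht => hC t (Set.Ioc_subset_Icc_self ht))

lemma my_exp_period (k : ℤ) :
    Complex.exp (-Complex.I * (k : ℂ) * ((2 * Real.pi : ℝ) : ℂ)) = 1 := by
  rw [show -Complex.I * (k : ℂ) * ((2 * Real.pi : ℝ) : ℂ)
      = ((-k : ℤ) : ℂ) * (2 * (Real.pi : ℂ) * Complex.I) by push_cast; ring]
  exact Complex.exp_int_mul_two_pi_mul_I (-k)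

lemma my_exp_norm (k : ℤ) (s : ℝ) :
    ‖Complex.exp (-Complex.I * (k : ℂ) * (s : ℂ))‖ = 1 := by
  rw [show -Complex.I * (k : ℂ) * (s : ℂ) = ((-(k * s) : ℝ) : ℂ) * Complex.I by push_cast; ring]
  rw [Complex.norm_exp_ofReal_mul_I]

lemma my_expCont (k : ℤ) : Continuous fun t : ℝ => Complex.exp (-Complex.I * (k : ℂ) * (t : ℂ)) := by
  continuity

lemma my_fourierCoef_zero {X : Type*} [NormedAddCommGroup X] [NormedSpace ℂ X]
    (g : ℝ → X) : fourierCoef g 0 =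
      (1 / (2 * (Real.pi : ℂ))) • ∫ s in (0:ℝ)..(2 * Real.pi), g s := by
  unfold fourierCoef
  congr 1
  refine intervalIntegral.integral_congr fun s _ => ?_
  simp

lemma my_fourierCoef_const_zero {X : Type*} [NormedAddCommGroup X] [NormedSpace ℂ X]
    [CompleteSpace X] (x : X) : fourierCoef (fun _ => x) 0 = x := by
  rw [my_fourierCoef_zero, intervalIntegral.integral_const, sub_zero, ← Complex.coe_smul,
    smul_smul]
  rw [show (1 / (2 * (Real.pi : ℂ))) * ((2 * Real.pi : ℝ) : ℂ) = 1 by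
    push_cast; exact one_div_mul_cancel my_twopi_ne]
  exact one_smul _ _

lemma my_fourierCoef_const_ne {X : Type*} [NormedAddCommGroup X] [NormedSpace ℂ X]
    [CompleteSpace X] (x : X) {k : ℤ} (hk : k ≠ 0) : fourierCoef (fun _ => x) k = 0 := by
  have hck : -Complex.I * (k : ℂ) ≠ 0 := by
    rw [neg_mul]
    exact neg_ne_zero.2 (mul_ne_zero Complex.I_ne_zero (Int.cast_ne_zero.2 hk))
  unfold fourierCoef
  rw [intervalIntegral.integral_smul_const, integral_exp_mul_complex hck, my_exp_period k]
  norm_num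

lemma my_fourierCoef_add_const {X : Type*} [NormedAddCommGroup X] [NormedSpace ℂ X]
    [CompleteSpace X] {g : ℝ → X} (hg : Continuous g) (x : X) (k : ℤ) :
    fourierCoef (fun t => g t + x) k = fourierCoef g k + fourierCoef (fun _ => x) k := by
  unfold fourierCoef
  rw [← smul_add, ← intervalIntegral.integral_add
    (f := fun s : ℝ => Complex.exp (-Complex.I * (k : ℂ) * (s : ℂ)) • g s)
    (g := fun s : ℝ => Complex.exp (-Complex.I * (k : ℂ) * (s : ℂ)) • (fun _ => x) s)
    (((my_expCont k).smul hg).intervalIntegrable _ _)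
    (((my_expCont k).smul continuous_const).intervalIntegrable _ _)]
  congr 1
  refine intervalIntegral.integral_congr fun s _ => ?_
  rw [smul_add]

lemma my_key {X : Type*} [NormedAddCommGroup X] [NormedSpace ℂ X] [CompleteSpace X]
    {v : ℝ → X} (hv1 : Integrable v (volume.restrict (Set.Ioc 0 (2 * Real.pi))))
    (hInt0 : (∫ s in (0:ℝ)..(2 * Real.pi), v s) = 0)
    (k : ℤ) (hk : k ≠ 0) :
    (∫ t in (0:ℝ)..(2 * Real.pi),
        Complex.exp (-Complex.I * (k : ℂ) * (t : ℂ)) • (∫ s in (0:ℝ)..t, v s))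
      = (Complex.I * (k : ℂ))⁻¹ •
        ∫ s in (0:ℝ)..(2 * Real.pi), Complex.exp (-Complex.I * (k : ℂ) * (s : ℂ)) • v s := by
  set ν := volume.restrict (Set.Ioc (0:ℝ) (2 * Real.pi)) with hν
  set c : ℂ := -Complex.I * (k : ℂ) with hc
  have hIk : (Complex.I * (k : ℂ)) ≠ 0 :=
    mul_ne_zero Complex.I_ne_zero (Int.cast_ne_zero.2 hk)
  have hck : c ≠ 0 := by rw [hc, neg_mul]; exact neg_ne_zero.2 hIk
  have hexpCont : Continuous fun t : ℝ => Complex.exp (c * (t : ℂ)) := by continuity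
  have hexpInt : Integrable (fun t : ℝ => Complex.exp (c * (t : ℂ))) ν :=
    hexpCont.integrableOn_Ioc
  set F : ℝ × ℝ → X :=
    Set.indicator {p : ℝ × ℝ | p.2 ≤ p.1} (fun z : ℝ × ℝ => Complex.exp (c * (z.1 : ℂ)) • v z.2)
    with hF
  have hmeas : MeasurableSet {p : ℝ × ℝ | p.2 ≤ p.1} :=
    measurableSet_le measurable_snd measurable_fst
  have hFint : Integrable F (ν.prod ν) := (hexpInt.smul_prod hv1).indicator hmeas
  have hswap : (∫ t, (∫ s, F (t, s) ∂ν) ∂ν) = ∫ s, (∫ t, F (t, s) ∂ν) ∂ν :=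
    integral_integral_swap hFint
  have hexpsmul : Integrable (fun s : ℝ => Complex.exp (c * (s : ℂ)) • v s) ν := by
    refine hv1.norm.mono' (hexpInt.aestronglyMeasurable.smul hv1.aestronglyMeasurable) ?_
    refine Eventually.of_forall fun s => ?_
    rw [norm_smul, hc, my_exp_norm k s, one_mul]
  have hL : (∫ t, (∫ s, F (t, s) ∂ν) ∂ν)
      = ∫ t in (0:ℝ)..(2 * Real.pi), Complex.exp (c * (t : ℂ)) • (∫ s in (0:ℝ)..t, v s) := by
    rw [intervalIntegral.integral_of_le my_twopi_pos.le]
    refine integral_congr_ae ((ae_restrict_iff' measurableSet_Ioc).2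
      (Eventually.of_forall fun t ht => ?_))
    have h1 : (fun s => F (t, s))
        = Set.indicator (Set.Iic t) (fun s => Complex.exp (c * (t : ℂ)) • v s) := by
      funext s
      by_cases hs : s ≤ t
      · simp only [hF, Set.indicator_of_mem, Set.mem_setOf_eq, hs, Set.mem_Iic]
      · simp only [hF, Set.indicator_of_notMem, Set.mem_setOf_eq, hs, Set.mem_Iic,
          not_false_iff]
    have h2 : Set.Iic t ∩ Set.Ioc 0 (2 * Real.pi) = Set.Ioc 0 t := by
      ext s
      simp only [Set.mem_inter_iff, Set.mem_Iic, Set.mem_Ioc]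
      exact ⟨fun h => ⟨h.2.1, h.1⟩, fun h => ⟨h.2, h.1, h.2.trans ht.2⟩⟩
    show (∫ s, F (t, s) ∂ν) = Complex.exp (c * (t : ℂ)) • ∫ s in (0:ℝ)..t, v s
    rw [h1, MeasureTheory.integral_indicator measurableSet_Iic, hν,
      Measure.restrict_restrict measurableSet_Iic, h2, MeasureTheory.integral_smul,
      ← intervalIntegral.integral_of_le ht.1.le]
  have hR : (∫ s, (∫ t, F (t, s) ∂ν) ∂ν)
      = (Complex.I * (k : ℂ))⁻¹ •
        ∫ s in (0:ℝ)..(2 * Real.pi), Complex.exp (c * (s : ℂ)) • v s := by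
    have hstep : ∀ s ∈ Set.Ioc (0:ℝ) (2 * Real.pi),
        (∫ t, F (t, s) ∂ν) = c⁻¹ • (v s - Complex.exp (c * (s : ℂ)) • v s) := by
      intro s hs
      have h1 : (fun t => F (t, s))
          = Set.indicator (Set.Ici s) (fun t => Complex.exp (c * (t : ℂ)) • v s) := by
        funext t
        by_cases hts : s ≤ t
        · simp only [hF, Set.indicator_of_mem, Set.mem_setOf_eq, hts, Set.mem_Ici]
        · simp only [hF, Set.indicator_of_notMem, Set.mem_setOf_eq, hts, Set.mem_Ici,
            not_false_iff]
      have h2 : Set.Ici s ∩ Set.Ioc 0 (2 * Real.pi) = Set.Icc s (2 * Real.pi) := by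
        ext t
        simp only [Set.mem_inter_iff, Set.mem_Ici, Set.mem_Ioc, Set.mem_Icc]
        exact ⟨fun h => ⟨h.1, h.2.2⟩, fun h => ⟨h.1, hs.1.trans_le h.1, h.2⟩⟩
      have h3 : Complex.exp (c * ((2 * Real.pi : ℝ) : ℂ)) = 1 := by
        rw [hc]; exact my_exp_period k
      rw [h1, MeasureTheory.integral_indicator measurableSet_Ici, hν,
        Measure.restrict_restrict measurableSet_Ici, h2, integral_Icc_eq_integral_Ioc,
        ← intervalIntegral.integral_of_le hs.2, intervalIntegral.integral_smul_const,
        integral_exp_mul_complex hck, h3]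
      rw [div_eq_inv_mul, mul_smul, sub_smul, one_smul]
    rw [intervalIntegral.integral_of_le my_twopi_pos.le, ← hν]
    have := integral_congr_ae (μ := ν)
      ((ae_restrict_iff' measurableSet_Ioc).2 (Eventually.of_forall hstep))
    rw [this]
    rw [MeasureTheory.integral_smul, integral_sub hv1 hexpsmul]
    have h0 : (∫ s, v s ∂ν) = 0 := by
      rw [hν, ← intervalIntegral.integral_of_le my_twopi_pos.le] at *
      exact hInt0
    rw [h0, zero_sub, smul_neg, ← neg_smul, ← inv_neg, hc, neg_mul, neg_neg]
  rw [intervalIntegral.integral_of_le my_twopi_pos.le] at hL ⊢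
  rw [← hν] at *
  rw [← hL, hswap, hR]

/-- For a sequence `{M_k}_{k∈ℤ} ⊆ B(X)` and `1 ≤ p < ∞`:
`{M_k}` is an `(L^p, H^{1,p})`-multiplier iff `{ik M_k}` is an `L^p`-multiplier. -/
theorem h1p_multiplier_iff {X : Type*}
    [NormedAddCommGroup X] [NormedSpace ℂ X] [CompleteSpace X]
    (p : ℝ≥0∞) (hp1 : 1 ≤ p) (hp2 : p < ⊤)
    (M : ℤ → (X →L[ℂ] X)) :
    (∀ f : ℝ → X, PeriodicLp p f →
      ∃ u : ℝ → X, MemH1p p u ∧ ∀ k : ℤ, fourierCoef u k = M k (fourierCoef f k)) ↔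
    IsLpMultiplier p (fun k : ℤ => (Complex.I * (k : ℂ)) • M k) := by
  constructor
  · intro H f hf
    obtain ⟨u, ⟨hu, v, hv, hvk⟩, huk⟩ := H f hf
    refine ⟨v, hv, fun k => ?_⟩
    rw [hvk k, huk k]
    simp
  · intro H f hf
    obtain ⟨v, hv, hvk⟩ := H f hf
    have hv1 : Integrable v (volume.restrict (Set.Ioc 0 (2 * Real.pi))) :=
      hv.2.integrable hp1
    have hvI0 : IntervalIntegrable v volume 0 (2 * Real.pi) :=
      (intervalIntegrable_iff_integrableOn_Ioc_of_le my_twopi_pos.le).2 hv1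
    have hvI : ∀ a b : ℝ, IntervalIntegrable v volume a b :=
      my_periodic_intervalIntegrable my_twopi_pos hv.1 hvI0
    set V : ℝ → X := fun t => ∫ s in (0:ℝ)..t, v s with hVdef
    have hVcont : Continuous V := intervalIntegral.continuous_primitive hvI 0
    have hIk : ∀ k : ℤ, k ≠ 0 → (Complex.I * (k : ℂ)) ≠ 0 := fun k hk =>
      mul_ne_zero Complex.I_ne_zero (Int.cast_ne_zero.2 hk)
    have hv0 : fourierCoef v 0 = 0 := by
      rw [hvk 0]; simp
    have hInt0 : (∫ s in (0:ℝ)..(2 * Real.pi), v s) = 0 := by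
      have h1 : fourierCoef v 0 = (1 / (2 * (Real.pi : ℂ))) •
          ∫ s in (0:ℝ)..(2 * Real.pi), v s := my_fourierCoef_zero v
      rw [hv0] at h1
      have h2 := congrArg (fun z => (2 * (Real.pi : ℂ)) • z) h1
      simp only [smul_zero, smul_smul, mul_one_div, div_self my_twopi_ne, one_smul] at h2
      exact h2.symm
    have hVper : Function.Periodic V (2 * Real.pi) := by
      intro t
      have hadd : V (t + 2 * Real.pi) = V t + ∫ s in t..(t + 2 * Real.pi), v s :=
        (intervalIntegral.integral_add_adjacent_intervals (hvI 0 t) (hvI t _)).symm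
      rw [hadd, hv.1.intervalIntegral_add_eq t 0, zero_add, hInt0, add_zero]
    -- relation between coefficients of V and v
    have hVhat : ∀ k : ℤ, k ≠ 0 →
        fourierCoef V k = (Complex.I * (k : ℂ))⁻¹ • fourierCoef v k := by
      intro k hk
      unfold fourierCoef
      rw [my_key hv1 hInt0 k hk, smul_comm]
    set c0 : X := M 0 (fourierCoef f 0) - fourierCoef V 0 with hc0
    set u : ℝ → X := fun t => V t + c0 with hu
    have hucont : Continuous u := hVcont.add continuous_const
    have huper : Function.Periodic u (2 * Real.pi) := fun t => by
      simp only [hu, hVper t]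
    have huLp : PeriodicLp p u := ⟨huper, my_continuous_memLp hucont p⟩
    have hu0 : fourierCoef u 0 = M 0 (fourierCoef f 0) := by
      rw [hu, my_fourierCoef_add_const hVcont c0 0, my_fourierCoef_const_zero, hc0]
      abel
    have huk : ∀ k : ℤ, k ≠ 0 → fourierCoef u k = fourierCoef V k := by
      intro k hk
      rw [hu, my_fourierCoef_add_const hVcont c0 k, my_fourierCoef_const_ne c0 hk, add_zero]
    have key2 : ∀ k : ℤ, fourierCoef u k = M k (fourierCoef f k) := by
      intro k
      by_cases hk : k = 0
      · subst hk; exact hu0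
      · have h1 : (Complex.I * (k : ℂ)) • fourierCoef u k
            = (Complex.I * (k : ℂ)) • (M k (fourierCoef f k)) := by
          rw [huk k hk, hVhat k hk, smul_smul, mul_inv_cancel₀ (hIk k hk), one_smul, hvk k]
          simp
        have h2 := congrArg (fun z => (Complex.I * (k : ℂ))⁻¹ • z) h1
        simp only [inv_smul_smul₀ (hIk k hk)] at h2
        exact h2
    have key3 : ∀ k : ℤ, fourierCoef v k = (Complex.I * (k : ℂ)) • fourierCoef u k := by
      intro k
      by_cases hk : k = 0
      · subst hk; rw [hv0]; simp
      · rw [huk k hk, hVhat k hk, smul_smul, mul_inv_cancel₀ (hIk k hk), one_smul]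
    exact ⟨u, ⟨huLp, v, hv, key3⟩, key2⟩


end
end

section
/- Let X be a complex Banach space, 1 ≤ p < ∞, A a closed linear operator on X with domain D(A), B a bounded linear operator on X, r_1,…,r_n real numbers, and f ∈ L^p(𝕋;X). If x is a 2π-periodic strong L^p-solution of Eq. (1), then for every k ∈ ℤ the Fourier coefficient x̂(k) belongs to D(A) and (ikI − A − Σ_{j=1}^n e^{−ikr_j} B) x̂(k) = f̂(k). -/
open MeasureTheory Real Complex Filter Finset intervalIntegral
open scoped ENNReal NNReal

noncomputable section

namespace StrongSolAux

lemma two_pi_pos' : (0:ℝ) < 2 * Real.pi := by positivity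

instance : IsFiniteMeasure (volume.restrict (Set.Ioc (0:ℝ) (2 * Real.pi))) :=
  ⟨by rw [Measure.restrict_apply_univ]; exact measure_Ioc_lt_top⟩

lemma norm_eker (k : ℤ) (t : ℝ) : ‖Complex.exp (-Complex.I * (k:ℂ) * (t:ℂ))‖ = 1 := by
  have h : -Complex.I * (k:ℂ) * (t:ℂ) = ((-(k * t) : ℝ) : ℂ) * Complex.I := by
    push_cast; ring
  rw [h, Complex.norm_exp_ofReal_mul_I]

lemma eker_periodic (k : ℤ) :
    Function.Periodic (fun t : ℝ => Complex.exp (-Complex.I * (k:ℂ) * (t:ℂ))) (2 * Real.pi) := by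
  intro t
  simp only
  have h : -Complex.I * (k:ℂ) * ((t + 2 * Real.pi : ℝ) : ℂ) =
      -Complex.I * (k:ℂ) * (t:ℂ) + ((-k : ℤ) : ℂ) * (2 * Real.pi * Complex.I) := by
    push_cast; ring
  rw [h, Complex.exp_add, Complex.exp_int_mul_two_pi_mul_I, mul_one]

variable {X : Type*} [NormedAddCommGroup X] [NormedSpace ℂ X]

lemma integrable_eker_smul {h : ℝ → X} (k : ℤ)
    (hi : Integrable h (volume.restrict (Set.Ioc 0 (2 * Real.pi)))) :
    Integrable (fun t : ℝ => Complex.exp (-Complex.I * (k:ℂ) * (t:ℂ)) • h t)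
      (volume.restrict (Set.Ioc 0 (2 * Real.pi))) := by
  refine hi.norm.mono' (AEStronglyMeasurable.smul ?_ hi.1) ?_
  · exact (Complex.continuous_exp.comp (by fun_prop)).aestronglyMeasurable
  · exact Filter.Eventually.of_forall fun t => by rw [norm_smul, norm_eker, one_mul]

lemma intervalIntegrable_eker_smul {h : ℝ → X} (k : ℤ)
    (hi : Integrable h (volume.restrict (Set.Ioc 0 (2 * Real.pi)))) :
    IntervalIntegrable (fun t : ℝ => Complex.exp (-Complex.I * (k:ℂ) * (t:ℂ)) • h t)
      volume 0 (2 * Real.pi) :=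
  (intervalIntegrable_iff_integrableOn_Ioc_of_le two_pi_pos'.le).mpr
    (integrable_eker_smul k hi)

omit [NormedSpace ℂ X] in
lemma integrable_shift {h : ℝ → X} (hper : Function.Periodic h (2 * Real.pi))
    (hi : Integrable h (volume.restrict (Set.Ioc 0 (2 * Real.pi)))) (r : ℝ) :
    Integrable (fun t : ℝ => h (t - r)) (volume.restrict (Set.Ioc 0 (2 * Real.pi))) := by
  haveI : VAddInvariantMeasure (AddSubgroup.zmultiples (2 * Real.pi)) ℝ volume :=
    ⟨fun c s _ => measure_preimage_add _ _ _⟩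
  have h1 := isAddFundamentalDomain_Ioc two_pi_pos' 0 (volume : Measure ℝ)
  have h2 := isAddFundamentalDomain_Ioc two_pi_pos' (-r) (volume : Measure ℝ)
  have key : IntegrableOn h (Set.Ioc (-r) (-r + 2 * Real.pi)) volume :=
    (h2.integrableOn_iff h1 hper.map_vadd_zmultiples).mpr
      (by rw [zero_add]; exact hi)
  have h3 : IntervalIntegrable h volume (-r) (-r + 2 * Real.pi) :=
    (intervalIntegrable_iff_integrableOn_Ioc_of_le (by linarith [two_pi_pos'])).mpr key
  have h4 := h3.comp_sub_right r
  have e1 : -r + r = (0:ℝ) := by ring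
  have e2 : -r + 2 * Real.pi + r = 2 * Real.pi := by ring
  rw [e1, e2] at h4
  exact (intervalIntegrable_iff_integrableOn_Ioc_of_le two_pi_pos'.le).mp h4

lemma fourierCoef_shift {h : ℝ → X} [CompleteSpace X]
    (hper : Function.Periodic h (2 * Real.pi)) (k : ℤ) (r : ℝ) :
    fourierCoef (fun t => h (t - r)) k
      = Complex.exp (-Complex.I * (k:ℂ) * (r:ℂ)) • fourierCoef h k := by
  unfold fourierCoef
  have key : (∫ s in (0:ℝ)..(2*Real.pi), Complex.exp (-Complex.I*(k:ℂ)*(s:ℂ)) • h (s - r))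
      = Complex.exp (-Complex.I*(k:ℂ)*(r:ℂ)) •
        ∫ s in (0:ℝ)..(2*Real.pi), Complex.exp (-Complex.I*(k:ℂ)*(s:ℂ)) • h s := by
    have h1 : ∀ s ∈ Set.uIcc (0:ℝ) (2*Real.pi), Complex.exp (-Complex.I*(k:ℂ)*(s:ℂ)) • h (s - r)
        = (fun u : ℝ => Complex.exp (-Complex.I*(k:ℂ)*(r:ℂ)) •
            (Complex.exp (-Complex.I*(k:ℂ)*(u:ℂ)) • h u)) (s - r) := by
      intro s _
      simp only [smul_smul, ← Complex.exp_add]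
      congr 2
      push_cast; ring
    rw [intervalIntegral.integral_congr h1,
      intervalIntegral.integral_comp_sub_right
        (fun u : ℝ => Complex.exp (-Complex.I*(k:ℂ)*(r:ℂ)) •
          (Complex.exp (-Complex.I*(k:ℂ)*(u:ℂ)) • h u)) r,
      intervalIntegral.integral_smul]
    congr 1
    have hper2 : Function.Periodic
        (fun u : ℝ => Complex.exp (-Complex.I*(k:ℂ)*(u:ℂ)) • h u) (2 * Real.pi) := by
      intro u
      simp only [hper u, eker_periodic k u]
    have e1 : (0:ℝ) - r = -r := by ring
    have e2 : 2*Real.pi - r = -r + 2*Real.pi := by ring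
    rw [e1, e2, hper2.intervalIntegral_add_eq (-r) 0, zero_add]
  rw [key, smul_comm]

lemma fourierCoef_clm [CompleteSpace X] {h : ℝ → X} (B : X →L[ℂ] X) (k : ℤ)
    (hi : Integrable h (volume.restrict (Set.Ioc 0 (2 * Real.pi)))) :
    fourierCoef (fun t => B (h t)) k = B (fourierCoef h k) := by
  unfold fourierCoef
  rw [ContinuousLinearMap.map_smul]
  congr 1
  rw [← B.intervalIntegral_comp_comm (intervalIntegrable_eker_smul k hi)]
  exact intervalIntegral.integral_congr fun s _ => (ContinuousLinearMap.map_smul _ _ _).symm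

end StrongSolAux

open StrongSolAux

/-- If `x` is a `2π`-periodic strong `L^p`-solution of Eq. (1) with
`f ∈ L^p(𝕋; X)`, then for every `k ∈ ℤ` one has `x̂(k) ∈ D(A)` and
`(ikI - A - Σ_j e^{-ikr_j} B) x̂(k) = f̂(k)`. -/
theorem strong_solution_fourierCoef {X : Type*}
    [NormedAddCommGroup X] [NormedSpace ℂ X] [CompleteSpace X]
    (p : ℝ≥0∞) (hp1 : 1 ≤ p) (hp2 : p < ⊤)
    (D : Submodule ℂ X) (A : D →ₗ[ℂ] X) (hA : IsClosedOp D A)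
    (B : X →L[ℂ] X) (n : ℕ) (r : Fin n → ℝ)
    (f x : ℝ → X) (hf : PeriodicLp p f)
    (hx : IsStrongSolution p D A B r f x) (k : ℤ) :
    ∃ h : fourierCoef x k ∈ D,
      (Complex.I * (k : ℂ)) • fourierCoef x k - A ⟨fourierCoef x k, h⟩
        - ∑ j, Complex.exp (-Complex.I * (k : ℂ) * (r j : ℂ)) • B (fourierCoef x k)
      = fourierCoef f k := by
  classical
  obtain ⟨hxper, v, hvper, hvc, hae⟩ := hx
  set μ : Measure ℝ := volume.restrict (Set.Ioc 0 (2 * Real.pi)) with hμ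
  have hxi : Integrable x μ := hxper.2.integrable hp1
  have hvi : Integrable v μ := hvper.2.integrable hp1
  have hfi : Integrable f μ := hf.2.integrable hp1
  have hxj : ∀ j : Fin n, Integrable (fun t => x (t - r j)) μ := fun j =>
    integrable_shift hxper.1 hxi (r j)
  have hBxj : ∀ j : Fin n, Integrable (fun t => B (x (t - r j))) μ := fun j =>
    B.integrable_comp (hxj j)
  have hSi : Integrable (fun t => ∑ j, B (x (t - r j))) μ :=
    integrable_finset_sum _ fun j _ => hBxj j
  set g : ℝ → X := fun t => v t - (∑ j, B (x (t - r j))) - f t with hgdef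
  have hgi : Integrable g μ := (hvi.sub hSi).sub hfi
  -- the graph of A
  set G : Submodule ℂ (X × X) := LinearMap.range ((D.subtype).prod A) with hGdef
  have hmemG : ∀ a b : X, ((a, b) ∈ G ↔ ∃ ha : a ∈ D, A ⟨a, ha⟩ = b) := by
    intro a b
    constructor
    · rintro ⟨d, hd⟩
      rw [LinearMap.prod_apply] at hd
      obtain ⟨h1, h2⟩ := Prod.mk.injEq .. ▸ hd
      refine ⟨h1 ▸ d.2, ?_⟩
      have : (⟨a, h1 ▸ d.2⟩ : D) = d := Subtype.ext h1.symm
      rw [this, h2]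
    · rintro ⟨ha, hab⟩
      exact ⟨⟨a, ha⟩, by simp [LinearMap.prod_apply, hab]⟩
  have hGclosed : IsClosed (G : Set (X × X)) := by
    apply IsSeqClosed.isClosed
    intro u l hu hul
    have hmem : ∀ m, ∃ ha : (u m).1 ∈ D, A ⟨(u m).1, ha⟩ = (u m).2 := fun m =>
      (hmemG (u m).1 (u m).2).mp (by simpa using hu m)
    choose d hd using hmem
    obtain ⟨ha, hab⟩ := hA (fun m => ⟨(u m).1, d m⟩) l.1 l.2
      ((continuous_fst.tendsto l).comp hul)
      (by simpa only [hd, Function.comp_def] using (continuous_snd.tendsto l).comp hul)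
    have : l = (l.1, l.2) := rfl
    rw [this]
    exact (hmemG l.1 l.2).mpr ⟨ha, hab⟩
  -- a.e. membership in the graph
  have haeG : ∀ᵐ t ∂μ, (x t, g t) ∈ (G : Set (X × X)) := by
    refine hae.mono fun t ht => ?_
    obtain ⟨hxt, hvt⟩ := ht
    refine (hmemG _ _).mpr ⟨hxt, ?_⟩
    simp only [hgdef, hvt]
    abel
  -- the pair of Fourier-type integrands
  set W : ℝ → X × X := fun t =>
    (Complex.exp (-Complex.I*(k:ℂ)*(t:ℂ)) • x t, Complex.exp (-Complex.I*(k:ℂ)*(t:ℂ)) • g t)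
    with hWdef
  have hWeq : ∀ t, W t = Complex.exp (-Complex.I*(k:ℂ)*(t:ℂ)) • ((x t, g t) : X × X) :=
    fun t => rfl
  have hWi : Integrable W μ :=
    (integrable_eker_smul (X := X) k hxi).prodMk (integrable_eker_smul (X := X) k hgi)
  have hWmem : ∀ᵐ t ∂μ, W t ∈ (G : Set (X × X)) := by
    refine haeG.mono fun t ht => ?_
    rw [hWeq]
    exact G.smul_mem _ ht
  -- integral stays in the (closed) graph
  have hμuniv : μ Set.univ ≠ 0 := by
    rw [hμ, Measure.restrict_apply_univ, Real.volume_Ioc]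
    have h0 : (0:ℝ) < 2 * Real.pi - 0 := by simpa using two_pi_pos'
    exact (ENNReal.ofReal_pos.mpr h0).ne'
  haveI : NeZero μ := ⟨Measure.measure_univ_ne_zero.mp hμuniv⟩
  have hIW : (∫ t, W t ∂μ) ∈ (G : Set (X × X)) := by
    have hsets : ((G.restrictScalars ℝ : Submodule ℝ (X × X)) : Set (X × X))
        = (G : Set (X × X)) := rfl
    have havg : (⨍ t, W t ∂μ) ∈ ((G.restrictScalars ℝ : Submodule ℝ (X × X)) : Set (X × X)) :=
      (G.restrictScalars ℝ).convex.average_mem (hsets ▸ hGclosed) (hsets ▸ hWmem) hWi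
    have hre : (∫ t, W t ∂μ) = (μ Set.univ).toReal • ⨍ t, W t ∂μ := by
      rw [average_eq, measureReal_def, smul_inv_smul₀]
      exact ENNReal.toReal_ne_zero.mpr ⟨hμuniv, measure_ne_top μ _⟩
    have hmem' : ((μ Set.univ).toReal • ⨍ t, W t ∂μ) ∈ G.restrictScalars ℝ :=
      (G.restrictScalars ℝ).smul_mem _ (SetLike.mem_coe.mp havg)
    rw [hre]
    exact SetLike.mem_coe.mpr ((Submodule.restrictScalars_mem ℝ G _).mp hmem')
  -- identify the integral with the Fourier coefficients
  have fc : ∀ h : ℝ → X, fourierCoef h k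
      = (1 / (2 * (Real.pi : ℂ))) • ∫ t, Complex.exp (-Complex.I*(k:ℂ)*(t:ℂ)) • h t ∂μ := by
    intro h
    rw [fourierCoef, intervalIntegral.integral_of_le two_pi_pos'.le]
  have hpair : (∫ t, W t ∂μ)
      = (∫ t, Complex.exp (-Complex.I*(k:ℂ)*(t:ℂ)) • x t ∂μ,
         ∫ t, Complex.exp (-Complex.I*(k:ℂ)*(t:ℂ)) • g t ∂μ) :=
    integral_pair (integrable_eker_smul k hxi) (integrable_eker_smul k hgi)
  have hGmem2 : ((fourierCoef x k, fourierCoef g k) : X × X) ∈ G := by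
    have : ((fourierCoef x k, fourierCoef g k) : X × X)
        = (1 / (2 * (Real.pi : ℂ))) • (∫ t, W t ∂μ) := by
      rw [hpair, fc x, fc g, Prod.smul_mk]
    rw [this]
    exact G.smul_mem _ hIW
  obtain ⟨hDmem, hAeq⟩ := (hmemG _ _).mp hGmem2
  -- compute the Fourier coefficient of g
  have hGsum' : (∫ t, Complex.exp (-Complex.I*(k:ℂ)*(t:ℂ)) • g t ∂μ)
      = (∫ t, Complex.exp (-Complex.I*(k:ℂ)*(t:ℂ)) • v t ∂μ)
        - (∑ j, ∫ t, Complex.exp (-Complex.I*(k:ℂ)*(t:ℂ)) • B (x (t - r j)) ∂μ)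
        - ∫ t, Complex.exp (-Complex.I*(k:ℂ)*(t:ℂ)) • f t ∂μ := by
    have h1 : (fun t : ℝ => Complex.exp (-Complex.I*(k:ℂ)*(t:ℂ)) • g t)
        = fun t : ℝ => (Complex.exp (-Complex.I*(k:ℂ)*(t:ℂ)) • v t
            - ∑ j, Complex.exp (-Complex.I*(k:ℂ)*(t:ℂ)) • B (x (t - r j)))
          - Complex.exp (-Complex.I*(k:ℂ)*(t:ℂ)) • f t := by
      funext t
      simp only [hgdef, smul_sub, Finset.smul_sum]
    have hint_sum : Integrable
        (fun t : ℝ => ∑ j, Complex.exp (-Complex.I*(k:ℂ)*(t:ℂ)) • B (x (t - r j))) μ :=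
      integrable_finset_sum _ fun j _ => integrable_eker_smul k (hBxj j)
    have h12 : Integrable (fun t : ℝ => Complex.exp (-Complex.I*(k:ℂ)*(t:ℂ)) • v t
        - ∑ j, Complex.exp (-Complex.I*(k:ℂ)*(t:ℂ)) • B (x (t - r j))) μ :=
      (integrable_eker_smul k hvi).sub hint_sum
    rw [h1, integral_sub h12 (integrable_eker_smul k hfi),
      integral_sub (integrable_eker_smul k hvi) hint_sum,
      integral_finset_sum _ fun j _ => integrable_eker_smul k (hBxj j)]
  have hGsum : fourierCoef g k = fourierCoef v k
      - (∑ j, fourierCoef (fun t => B (x (t - r j))) k) - fourierCoef f k := by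
    rw [fc g, hGsum', smul_sub, smul_sub, ← fc v, ← fc f, Finset.smul_sum]
    congr 2
    exact Finset.sum_congr rfl fun j _ => (fc _).symm
  have hBshift : ∀ j : Fin n, fourierCoef (fun t => B (x (t - r j))) k
      = Complex.exp (-Complex.I*(k:ℂ)*((r j : ℝ):ℂ)) • B (fourierCoef x k) := by
    intro j
    rw [fourierCoef_clm B k (hxj j), fourierCoef_shift hxper.1 k (r j),
      ContinuousLinearMap.map_smul]
  rw [hGsum, hvc k] at hAeq
  simp only [hBshift] at hAeq
  refine ⟨hDmem, ?_⟩
  rw [hAeq]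
  abel


end
end

section
/- Let X be a complex Banach space, 1 ≤ p < ∞, A a closed linear operator on X with domain D(A), B a bounded linear operator on X, r_1,…,r_n real numbers, and f ∈ L^p(𝕋;X). Suppose x : ℝ → X is a 2π-periodic function, continuous on [0,2π], such that ∫₀^t x(s) ds ∈ D(A) for all t ∈ [0,2π] and x(t) = x(0) + A∫₀^t x(s) ds + ∫₀^t ( Σ_{j=1}^n B x(s − r_j) + f(s) ) ds for all t ∈ [0,2π] (in particular x(2π) = x(0)). Then for every k ∈ ℤ the Fourier coefficient x̂(k) belongs to D(A) and (ikI − A − Σ_{j=1}^n e^{−ikr_j} B) x̂(k) = f̂(k). -/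
open MeasureTheory Real Complex Filter Finset intervalIntegral
open scoped ENNReal NNReal

noncomputable section

section AuxLemmas

set_option linter.unusedSectionVars false

lemma ek_hasDerivAt (k : ℤ) (t : ℝ) :
    HasDerivAt (fun s : ℝ => Complex.exp (-Complex.I * k * s))
      (-Complex.I * k * Complex.exp (-Complex.I * k * t)) t := by
  have h0 : HasDerivAt (fun s : ℝ => (s : ℂ)) 1 t := by
    simpa using (hasDerivAt_id t).ofReal_comp
  have h1 : HasDerivAt (fun s : ℝ => -Complex.I * k * s) (-Complex.I * k) t := by
    simpa using h0.const_mul (-Complex.I * (k:ℂ))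
  simpa [mul_comm] using h1.cexp

lemma ek_two_pi (k : ℤ) : Complex.exp (-Complex.I * k * ((2 * Real.pi : ℝ) : ℂ)) = 1 := by
  have := Complex.exp_int_mul_two_pi_mul_I (-k)
  rw [← this]
  congr 1
  push_cast
  ring

lemma ek_periodic (k : ℤ) :
    Function.Periodic (fun s : ℝ => Complex.exp (-Complex.I * k * s)) (2 * Real.pi) := by
  intro s
  simp only [Complex.ofReal_add]
  rw [mul_add, Complex.exp_add, ek_two_pi k, mul_one]

lemma integral_ek (k : ℤ) (hk : k ≠ 0) (a b : ℝ) :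
    ∫ t in a..b, Complex.exp (-Complex.I * k * t)
      = (Complex.exp (-Complex.I * k * b) - Complex.exp (-Complex.I * k * a)) / (-Complex.I * k) := by
  have hne : (-Complex.I * k) ≠ 0 := by
    simp [Complex.I_ne_zero, Complex.ext_iff]
    exact_mod_cast hk
  have hder : ∀ t ∈ Set.uIcc a b,
      HasDerivAt (fun s : ℝ => Complex.exp (-Complex.I * k * s) / (-Complex.I * k))
        (Complex.exp (-Complex.I * k * t)) t := by
    intro t _
    have h := (ek_hasDerivAt k t).div_const (-Complex.I * k)
    have : -Complex.I * ↑k * Complex.exp (-Complex.I * ↑k * ↑t) / (-Complex.I * ↑k)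
        = Complex.exp (-Complex.I * ↑k * ↑t) := by
      have hne2 : (Complex.I * (k:ℂ)) ≠ 0 := fun h2 => hne (by rw [neg_mul]; simp [h2])
      field_simp
    rwa [this] at h
  have hint : IntervalIntegrable (fun t : ℝ => Complex.exp (-Complex.I * k * t)) volume a b := by
    exact Continuous.intervalIntegrable (by fun_prop) a b
  rw [intervalIntegral.integral_eq_sub_of_hasDerivAt hder hint]
  ring

lemma ek_norm_one (k : ℤ) (t : ℝ) : ‖Complex.exp (-Complex.I * k * t)‖ = 1 := by
  rw [Complex.norm_exp]
  have : (-Complex.I * k * t).re = 0 := by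
    simp [Complex.mul_re, Complex.mul_im]
  rw [this, Real.exp_zero]

instance finite_restrict_Ioc : IsFiniteMeasure (volume.restrict (Set.Ioc (0:ℝ) (2*Real.pi))) := by
  constructor
  rw [Measure.restrict_apply_univ, Real.volume_Ioc]
  exact ENNReal.ofReal_lt_top

lemma periodic_continuous_of_continuousOn {X : Type*} [TopologicalSpace X]
    {x : ℝ → X} (hper : Function.Periodic x (2 * Real.pi))
    (hcont : ContinuousOn x (Set.Icc 0 (2 * Real.pi))) : Continuous x := by
  have hp : (0:ℝ) < 2 * Real.pi := by positivity
  haveI hfa : Fact ((0:ℝ) < 2 * Real.pi) := ⟨hp⟩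
  have hxy : x = (AddCircle.liftIco (2 * Real.pi) 0 x) ∘ ((↑) : ℝ → AddCircle (2 * Real.pi)) := by
    funext t
    have h1 : (AddCircle.liftIco (2 * Real.pi) 0 x) ((t : ℝ) : AddCircle (2 * Real.pi))
        = x (toIcoMod hp 0 t) := by
      simp only [AddCircle.liftIco, AddCircle.equivIco, Function.comp_apply,
        QuotientAddGroup.equivIcoMod_coe, Set.restrict_apply]
    have h2 : x (toIcoMod hp 0 t) = x t := by
      rw [← self_sub_toIcoDiv_zsmul hp 0 t]
      exact hper.sub_zsmul_eq _
    simp only [Function.comp_apply, h1, h2]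
  rw [hxy]
  refine (AddCircle.liftIco_continuous ?_ ?_).comp continuous_quotient_mk'
  · rw [zero_add]
    have := hper 0
    simpa using this.symm
  · rwa [zero_add]

variable {X : Type*} [NormedAddCommGroup X] [NormedSpace ℂ X] [CompleteSpace X]
  {D : Submodule ℂ X} {A : D →ₗ[ℂ] X}

lemma graph_closed (hA : IsClosedOp D A) :
    IsClosed (LinearMap.range (D.subtype.prod A) : Set (X × X)) := by
  apply IsSeqClosed.isClosed
  intro u l hu hl
  choose d hd using hu
  have h1 : Tendsto (fun n => ((d n : X))) atTop (nhds l.1) := by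
    have : (fun n => ((d n : X))) = fun n => (u n).1 := by
      funext n; rw [← hd n]; rfl
    rw [this]; exact (continuous_fst.tendsto l).comp hl
  have h2 : Tendsto (fun n => A (d n)) atTop (nhds l.2) := by
    have : (fun n => A (d n)) = fun n => (u n).2 := by
      funext n; rw [← hd n]; rfl
    rw [this]; exact (continuous_snd.tendsto l).comp hl
  obtain ⟨ha, hab⟩ := hA d l.1 l.2 h1 h2
  exact ⟨⟨l.1, ha⟩, Prod.ext rfl hab⟩

lemma hille (hA : IsClosedOp D A) {a b : ℝ} (hab : a ≤ b) {φ ψ : ℝ → X}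
    (hφ : ContinuousOn φ (Set.Icc a b)) (hψ : ContinuousOn ψ (Set.Icc a b))
    (hmem : ∀ t ∈ Set.Icc a b, ∃ h : φ t ∈ D, A ⟨φ t, h⟩ = ψ t) :
    ∃ h : (∫ t in a..b, φ t) ∈ D, A ⟨∫ t in a..b, φ t, h⟩ = ∫ t in a..b, ψ t := by
  set Γ : Submodule ℂ (X × X) := LinearMap.range (D.subtype.prod A) with hΓ
  have hcl : IsClosed (Γ : Set (X × X)) := graph_closed hA
  haveI : CompleteSpace Γ := hcl.completeSpace_coe
  set c : ℝ → ℝ := fun t => max a (min t b) with hc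
  have hcmem : ∀ t, c t ∈ Set.Icc a b := fun t =>
    ⟨le_max_left _ _, max_le hab (min_le_right _ _)⟩
  have hceq : ∀ t ∈ Set.Icc a b, c t = t := by
    intro t ht
    simp [hc, min_eq_left ht.2, max_eq_right ht.1]
  have hccont : Continuous c := continuous_const.max (continuous_id.min continuous_const)
  have hFmem : ∀ t : ℝ, (φ (c t), ψ (c t)) ∈ Γ := by
    intro t
    obtain ⟨h, heq⟩ := hmem (c t) (hcmem t)
    exact ⟨⟨φ (c t), h⟩, Prod.ext rfl heq⟩
  set F : ℝ → Γ := fun t => ⟨(φ (c t), ψ (c t)), hFmem t⟩ with hF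
  have hFcont : Continuous F := by
    apply Continuous.subtype_mk
    exact ((hφ.comp_continuous hccont hcmem).prodMk (hψ.comp_continuous hccont hcmem))
  have hFint : IntervalIntegrable F volume a b := hFcont.intervalIntegrable a b
  set I : Γ := ∫ t in a..b, F t with hI
  have hval : (I : X × X) = ∫ t in a..b, ((F t : X × X)) := by
    show Γ.subtypeL I = _
    rw [hI, ← Γ.subtypeL.intervalIntegral_comp_comm hFint]; rfl
  have hvalint : IntervalIntegrable (fun t => ((F t : X × X))) volume a b :=
    Continuous.intervalIntegrable (continuous_subtype_val.comp hFcont) a b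
  have hfst : (I : X × X).1 = ∫ t in a..b, φ t := by
    have h1 : (I : X × X).1 = (ContinuousLinearMap.fst ℂ X X) (I : X × X) := rfl
    rw [h1, hval, ← (ContinuousLinearMap.fst ℂ X X).intervalIntegral_comp_comm hvalint]
    apply intervalIntegral.integral_congr
    intro t ht
    rw [Set.uIcc_of_le hab] at ht
    simp only [ContinuousLinearMap.coe_fst']
    exact congrArg φ (hceq t ht)
  have hsnd : (I : X × X).2 = ∫ t in a..b, ψ t := by
    have h1 : (I : X × X).2 = (ContinuousLinearMap.snd ℂ X X) (I : X × X) := rfl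
    rw [h1, hval, ← (ContinuousLinearMap.snd ℂ X X).intervalIntegral_comp_comm hvalint]
    apply intervalIntegral.integral_congr
    intro t ht
    rw [Set.uIcc_of_le hab] at ht
    simp only [ContinuousLinearMap.coe_snd']
    exact congrArg ψ (hceq t ht)
  obtain ⟨dd, hdd⟩ := I.2
  have h1 : (dd : X) = ∫ t in a..b, φ t := by
    rw [← hfst, ← hdd]; rfl
  have h2 : A dd = ∫ t in a..b, ψ t := by
    rw [← hsnd, ← hdd]; rfl
  refine ⟨h1 ▸ dd.2, ?_⟩
  rw [← h2]
  congr 1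
  exact Subtype.ext h1.symm

lemma ek_smul_integrable (g : ℝ → X)
    (hg : Integrable g (volume.restrict (Set.Ioc (0:ℝ) (2*Real.pi)))) (k : ℤ) :
    Integrable (fun t : ℝ => Complex.exp (-Complex.I * k * t) • g t)
      (volume.restrict (Set.Ioc (0:ℝ) (2*Real.pi))) := by
  apply Integrable.mono' hg.norm
  · exact (Continuous.aestronglyMeasurable (by fun_prop)).smul hg.1
  · refine Filter.Eventually.of_forall fun t => ?_
    rw [norm_smul, ek_norm_one, one_mul]

lemma fubini_ekG (g : ℝ → X)
    (hg : Integrable g (volume.restrict (Set.Ioc (0:ℝ) (2*Real.pi)))) (k : ℤ) (hk : k ≠ 0) :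
    ∫ t in (0:ℝ)..(2*Real.pi), Complex.exp (-Complex.I * k * t) • (∫ s in (0:ℝ)..t, g s)
      = (Complex.I * k)⁻¹ •
        ((∫ t in (0:ℝ)..(2*Real.pi), Complex.exp (-Complex.I * k * t) • g t)
          - ∫ s in (0:ℝ)..(2*Real.pi), g s) := by
  have hπ : (0:ℝ) < 2 * Real.pi := by positivity
  set μ := volume.restrict (Set.Ioc (0:ℝ) (2*Real.pi)) with hμ
  set ek : ℝ → ℂ := fun t => Complex.exp (-Complex.I * k * t) with hek
  set F : ℝ × ℝ → X := fun p => if p.2 ≤ p.1 then ek p.1 • g p.2 else 0 with hF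
  have hIkne : (Complex.I * (k:ℂ)) ≠ 0 := by
    apply mul_ne_zero Complex.I_ne_zero
    exact_mod_cast hk
  have hmeasIoc : MeasurableSet (Set.Ioc (0:ℝ) (2*Real.pi)) := measurableSet_Ioc
  have hFaesm : AEStronglyMeasurable F (μ.prod μ) := by
    have h1 : AEStronglyMeasurable (fun p : ℝ × ℝ => ek p.1 • g p.2) (μ.prod μ) :=
      (Continuous.aestronglyMeasurable (by fun_prop)).smul hg.1.comp_snd
    have h2 : F = Set.indicator {p : ℝ × ℝ | p.2 ≤ p.1} (fun p => ek p.1 • g p.2) := by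
      funext p
      rw [Set.indicator_apply]
      rfl
    rw [h2]
    exact h1.indicator (measurableSet_le measurable_snd measurable_fst)
  have hFint : Integrable F (μ.prod μ) := by
    apply Integrable.mono' (g := fun p : ℝ × ℝ => (1:ℝ) * ‖g p.2‖)
      ((integrable_const (1:ℝ)).mul_prod hg.norm) hFaesm
    refine Filter.Eventually.of_forall fun p => ?_
    rw [one_mul, hF]
    by_cases h : p.2 ≤ p.1
    · simp only [if_pos h]
      rw [norm_smul, ek_norm_one, one_mul]
    · simp only [if_neg h, norm_zero]
      exact norm_nonneg _
  have hswap : ∫ t, (∫ s, F (t, s) ∂μ) ∂μ = ∫ s, (∫ t, F (t, s) ∂μ) ∂μ :=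
    MeasureTheory.integral_integral_swap hFint
  have hL : ∫ t, (∫ s, F (t, s) ∂μ) ∂μ = ∫ t in (0:ℝ)..(2*Real.pi), ek t • (∫ s in (0:ℝ)..t, g s) := by
    rw [intervalIntegral.integral_of_le hπ.le]
    apply MeasureTheory.setIntegral_congr_fun hmeasIoc
    intro t ht
    show (∫ s, F (t, s) ∂μ) = ek t • ∫ s in (0:ℝ)..t, g s
    have h1 : (fun s => F (t, s)) = Set.indicator (Set.Iic t) (fun s => ek t • g s) := by
      funext s
      rw [Set.indicator_apply]
      rfl
    rw [h1, MeasureTheory.integral_indicator measurableSet_Iic, hμ,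
      Measure.restrict_restrict measurableSet_Iic]
    have h2 : Set.Iic t ∩ Set.Ioc 0 (2*Real.pi) = Set.Ioc 0 t := by
      ext s
      constructor
      · rintro ⟨h3, h4, h5⟩; exact ⟨h4, h3⟩
      · rintro ⟨h3, h4⟩; exact ⟨h4, h3, h4.trans ht.2⟩
    rw [h2, MeasureTheory.integral_smul, intervalIntegral.integral_of_le ht.1.le]
  have hR : ∫ s, (∫ t, F (t, s) ∂μ) ∂μ
      = (Complex.I * k)⁻¹ •
        ((∫ t in (0:ℝ)..(2*Real.pi), ek t • g t) - ∫ s in (0:ℝ)..(2*Real.pi), g s) := by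
    have hstep : ∀ s ∈ Set.Ioc (0:ℝ) (2*Real.pi),
        (∫ t, F (t, s) ∂μ) = (Complex.I * k)⁻¹ • ((ek s) • g s - g s) := by
      intro s hs
      show (∫ t, F (t, s) ∂μ) = (Complex.I * k)⁻¹ • ((ek s) • g s - g s)
      have h1 : (fun t => F (t, s)) = Set.indicator (Set.Ici s) (fun t => ek t • g s) := by
        funext t
        rw [Set.indicator_apply]
        rfl
      rw [h1, MeasureTheory.integral_indicator measurableSet_Ici, hμ,
        Measure.restrict_restrict measurableSet_Ici]
      have h2 : Set.Ici s ∩ Set.Ioc 0 (2*Real.pi) = Set.Icc s (2*Real.pi) := by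
        ext t
        constructor
        · rintro ⟨h3, h4, h5⟩; exact ⟨h3, h5⟩
        · rintro ⟨h3, h4⟩; exact ⟨h3, hs.1.trans_le h3, h4⟩
      rw [h2, MeasureTheory.integral_Icc_eq_integral_Ioc,
        ← intervalIntegral.integral_of_le hs.2]
      rw [intervalIntegral.integral_smul_const, integral_ek k hk s (2*Real.pi)]
      have h3 : (ek (2*Real.pi) - ek s) / (-Complex.I * k) = (Complex.I*k)⁻¹ * (ek s - 1) := by
        have he : ek (2*Real.pi) = 1 := ek_two_pi k
        rw [he, neg_mul, div_neg, ← neg_div, neg_sub, div_eq_inv_mul]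
      rw [h3, mul_smul, sub_smul, one_smul]
    rw [MeasureTheory.setIntegral_congr_fun hmeasIoc hstep]
    rw [MeasureTheory.integral_smul]
    rw [MeasureTheory.integral_sub (ek_smul_integrable g hg k) hg]
    rw [intervalIntegral.integral_of_le hπ.le, intervalIntegral.integral_of_le hπ.le]
  rw [← hL, hswap, hR]

lemma shift_integral (B : X →L[ℂ] X) (x : ℝ → X) (hxc : Continuous x)
    (hxper : Function.Periodic x (2 * Real.pi)) (k : ℤ) (c : ℝ) :
    ∫ t in (0:ℝ)..(2*Real.pi), Complex.exp (-Complex.I * k * t) • B (x (t - c))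
      = Complex.exp (-Complex.I * (k:ℂ) * (c:ℂ)) •
        B (∫ t in (0:ℝ)..(2*Real.pi), Complex.exp (-Complex.I * k * t) • x t) := by
  have hxcc : Continuous (fun t : ℝ => x (t - c)) := hxc.comp (continuous_sub_right c)
  have hekc : Continuous (fun t : ℝ => Complex.exp (-Complex.I * k * t)) := by fun_prop
  have h1 : ∀ t : ℝ, Complex.exp (-Complex.I * k * t) • B (x (t - c))
      = B (Complex.exp (-Complex.I * k * t) • x (t - c)) := fun t => (_root_.map_smul B _ _).symm
  rw [intervalIntegral.integral_congr (fun t _ => h1 t)]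
  rw [B.intervalIntegral_comp_comm (f := fun t : ℝ => Complex.exp (-Complex.I * k * t) • x (t - c))
    (Continuous.intervalIntegrable (hekc.smul hxcc) _ _)]
  rw [← _root_.map_smul]
  congr 1
  set h0 : ℝ → X := fun u => Complex.exp (-Complex.I * k * ((u + c : ℝ) : ℂ)) • x u with hh0
  have hcomp : ∀ t : ℝ, Complex.exp (-Complex.I * k * t) • x (t - c) = h0 (t - c) := by
    intro t
    rw [hh0]
    simp only [sub_add_cancel]
  rw [intervalIntegral.integral_congr (fun t _ => hcomp t)]
  rw [intervalIntegral.integral_comp_sub_right h0 c]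
  have hsplit : ∀ u : ℝ, h0 u
      = Complex.exp (-Complex.I * (k:ℂ) * (c:ℂ)) • (Complex.exp (-Complex.I * k * u) • x u) := by
    intro u
    rw [hh0]
    simp only []
    rw [← mul_smul, ← Complex.exp_add]
    congr 2
    push_cast
    ring
  rw [intervalIntegral.integral_congr (fun u _ => hsplit u)]
  rw [intervalIntegral.integral_smul]
  congr 1
  have hper : Function.Periodic (fun u : ℝ => Complex.exp (-Complex.I * k * u) • x u)
      (2*Real.pi) := by
    intro u
    have e1 : Complex.exp (-Complex.I * k * ((u + 2*Real.pi : ℝ) : ℂ))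
        = Complex.exp (-Complex.I * k * (u : ℂ)) := (ek_periodic k) u
    simp only []
    rw [e1, hxper u]
  have h2 := hper.intervalIntegral_add_eq (0 - c) 0
  rw [zero_add] at h2
  have he1 : (0:ℝ) - c + 2*Real.pi = 2*Real.pi - c := by ring
  rw [he1] at h2
  exact h2


end AuxLemmas

/-- If `x` is `2π`-periodic, continuous on `[0, 2π]`, with
`∫₀ᵗ x(s) ds ∈ D(A)` and `x(t) = x(0) + A∫₀ᵗ x(s) ds + ∫₀ᵗ (Σ_j Bx(s - r_j) + f(s)) ds`
for all `t ∈ [0, 2π]`, then for every `k ∈ ℤ` one has `x̂(k) ∈ D(A)` and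
`(ikI - A - Σ_j e^{-ikr_j} B) x̂(k) = f̂(k)`. -/
theorem mild_solution_fourierCoef {X : Type*}
    [NormedAddCommGroup X] [NormedSpace ℂ X] [CompleteSpace X]
    (p : ℝ≥0∞) (hp1 : 1 ≤ p) (hp2 : p < ⊤)
    (D : Submodule ℂ X) (A : D →ₗ[ℂ] X) (hA : IsClosedOp D A)
    (B : X →L[ℂ] X) (n : ℕ) (r : Fin n → ℝ)
    (f : ℝ → X) (hf : PeriodicLp p f)
    (x : ℝ → X) (hxper : Function.Periodic x (2 * Real.pi))
    (hxcont : ContinuousOn x (Set.Icc 0 (2 * Real.pi)))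
    (hxmem : ∀ t ∈ Set.Icc (0:ℝ) (2 * Real.pi), (∫ s in (0:ℝ)..t, x s) ∈ D)
    (hxeq : ∀ t : ℝ, ∀ ht : t ∈ Set.Icc (0:ℝ) (2 * Real.pi),
      x t = x 0 + A ⟨∫ s in (0:ℝ)..t, x s, hxmem t ht⟩
        + ∫ s in (0:ℝ)..t, ((∑ j, B (x (s - r j))) + f s))
    (k : ℤ) :
    ∃ h : fourierCoef x k ∈ D,
      (Complex.I * (k : ℂ)) • fourierCoef x k - A ⟨fourierCoef x k, h⟩
        - ∑ j, Complex.exp (-Complex.I * (k : ℂ) * (r j : ℂ)) • B (fourierCoef x k)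
      = fourierCoef f k := by
  have hπ : (0:ℝ) < 2 * Real.pi := by positivity
  have h2π : (2*Real.pi) ∈ Set.Icc (0:ℝ) (2*Real.pi) := ⟨hπ.le, le_refl _⟩
  set ek : ℝ → ℂ := fun s => Complex.exp (-Complex.I * (k:ℂ) * (s:ℂ)) with hekdef
  have hekc : Continuous ek := by fun_prop
  have hxc : Continuous x := periodic_continuous_of_continuousOn hxper hxcont
  -- integrability of f and g
  have hfint : Integrable f (volume.restrict (Set.Ioc (0:ℝ) (2*Real.pi))) :=
    hf.2.integrable hp1
  set g : ℝ → X := fun s => (∑ j, B (x (s - r j))) + f s with hgdef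
  have hsumc : Continuous (fun s => ∑ j, B (x (s - r j))) := by
    apply continuous_finset_sum
    intro j _
    exact B.continuous.comp (hxc.comp (continuous_sub_right (r j)))
  have hgint : Integrable g (volume.restrict (Set.Ioc (0:ℝ) (2*Real.pi))) :=
    (hsumc.integrableOn_Ioc).add hfint
  set G : ℝ → X := fun t => ∫ s in (0:ℝ)..t, g s with hGdef
  set Xint : ℝ → X := fun t => ∫ s in (0:ℝ)..t, x s with hXintdef
  have hXd : ∀ t : ℝ, HasDerivAt Xint (x t) t := fun t =>
    (hxc.integral_hasStrictDerivAt 0 t).hasDerivAt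
  have hXc : Continuous Xint := by
    apply continuous_iff_continuousAt.mpr
    intro t
    exact (hXd t).continuousAt
  have hGcont : ContinuousOn G (Set.Icc 0 (2*Real.pi)) := by
    have hci : IntegrableOn g (Set.Icc (0:ℝ) (2*Real.pi)) volume := by
      rw [integrableOn_Icc_iff_integrableOn_Ioc]
      exact hgint
    have := intervalIntegral.continuousOn_primitive (μ := volume) (a := (0:ℝ))
      (b := 2*Real.pi) hci
    apply this.congr
    intro t ht
    rw [hGdef]
    exact intervalIntegral.integral_of_le ht.1
  -- basic identities
  have hXI : Xint (2*Real.pi) ∈ D := hxmem _ h2π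
  have hx2π : x (2*Real.pi) = x 0 := by
    have := hxper 0
    rwa [zero_add] at this
  have hA2π : A ⟨Xint (2*Real.pi), hXI⟩ = -G (2*Real.pi) := by
    have h := hxeq (2*Real.pi) h2π
    rw [hx2π, add_assoc] at h
    exact eq_neg_of_add_eq_zero_left (left_eq_add.mp h)
  -- interval integrability facts
  have hgII : IntervalIntegrable g volume 0 (2*Real.pi) :=
    (intervalIntegrable_iff_integrableOn_Ioc_of_le hπ.le).mpr hgint
  have hekfII : IntervalIntegrable (fun t => ek t • f t) volume 0 (2*Real.pi) :=
    (intervalIntegrable_iff_integrableOn_Ioc_of_le hπ.le).mpr (ek_smul_integrable f hfint k)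
  set Cx : X := ∫ t in (0:ℝ)..(2*Real.pi), ek t • x t with hCxdef
  set Cg : X := ∫ t in (0:ℝ)..(2*Real.pi), ek t • g t with hCgdef
  set Cf : X := ∫ t in (0:ℝ)..(2*Real.pi), ek t • f t with hCfdef
  -- the key identity
  have hKey : ∃ hCx : Cx ∈ D, (Complex.I * (k:ℂ)) • Cx - A ⟨Cx, hCx⟩ = Cg := by
    by_cases hk : k = 0
    · subst hk
      have hek1 : ∀ s : ℝ, ek s = 1 := by
        intro s
        simp [hekdef]
      have hCx0 : Cx = Xint (2*Real.pi) :=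
        intervalIntegral.integral_congr (fun s _ => by rw [hek1 s, one_smul])
      have hCg0 : Cg = G (2*Real.pi) :=
        intervalIntegral.integral_congr (fun s _ => by rw [hek1 s, one_smul])
      rw [hCx0, hCg0]
      refine ⟨hXI, ?_⟩
      rw [hA2π]
      simp
    · -- k ≠ 0
      have hIkne : (Complex.I * (k:ℂ)) ≠ 0 := by
        apply mul_ne_zero Complex.I_ne_zero
        exact_mod_cast hk
      -- Hille
      have hφc : ContinuousOn (fun t => ek t • Xint t) (Set.Icc 0 (2*Real.pi)) :=
        (hekc.smul hXc).continuousOn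
      have hψc : ContinuousOn (fun t => ek t • (x t - x 0 - G t)) (Set.Icc 0 (2*Real.pi)) :=
        hekc.continuousOn.smul (((hxc.continuousOn).sub continuousOn_const).sub hGcont)
      have hmem' : ∀ t ∈ Set.Icc (0:ℝ) (2*Real.pi),
          ∃ h : (fun t => ek t • Xint t) t ∈ D,
            A ⟨(fun t => ek t • Xint t) t, h⟩ = (fun t => ek t • (x t - x 0 - G t)) t := by
        intro t ht
        simp only []
        refine ⟨D.smul_mem (ek t) (hxmem t ht), ?_⟩
        have hAs : A (ek t • (⟨Xint t, hxmem t ht⟩ : D)) = ek t • A ⟨Xint t, hxmem t ht⟩ :=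
          _root_.map_smul A (ek t) _
        have hAeq : A ⟨Xint t, hxmem t ht⟩ = x t - x 0 - G t := by
          rw [hxeq t ht]
          abel
        rw [← hAeq]
        exact hAs
      obtain ⟨hJ, hAJ⟩ := hille hA hπ.le hφc hψc hmem'
      set J : X := ∫ t in (0:ℝ)..(2*Real.pi), ek t • Xint t with hJdef
      set Z : X := ∫ t in (0:ℝ)..(2*Real.pi), ek t • G t with hZdef
      -- ∫ ek = 0
      have hek0 : (∫ t in (0:ℝ)..(2*Real.pi), ek t) = 0 := by
        rw [hekdef, integral_ek k hk, ek_two_pi k]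
        simp
      -- ∫ ψ = Cx - Z
      have hW : (∫ t in (0:ℝ)..(2*Real.pi), ek t • (x t - x 0 - G t)) = Cx - Z := by
        have h1 : ∀ t : ℝ, ek t • (x t - x 0 - G t)
            = (ek t • x t - ek t • x 0) - ek t • G t := by
          intro t
          rw [smul_sub, smul_sub]
        rw [intervalIntegral.integral_congr (fun t _ => h1 t)]
        rw [intervalIntegral.integral_sub (f := fun t => ek t • x t - ek t • x 0) (g := fun t => ek t • G t)
          ((Continuous.intervalIntegrable ((hekc.smul hxc).sub (hekc.smul continuous_const)) _ _))
          (((hekc.continuousOn.smul hGcont).mono (by rw [Set.uIcc_of_le hπ.le])).intervalIntegrable)]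
        rw [intervalIntegral.integral_sub (f := fun t => ek t • x t) (g := fun t => ek t • x 0)
          (Continuous.intervalIntegrable (hekc.smul hxc) _ _)
          (Continuous.intervalIntegrable (hekc.smul continuous_const) _ _)]
        rw [intervalIntegral.integral_smul_const, hek0, zero_smul, sub_zero]
      -- IBP
      have hIBP : Cx + (-(Complex.I * (k:ℂ))) • J = Xint (2*Real.pi) := by
        have hder : ∀ t ∈ Set.uIcc (0:ℝ) (2*Real.pi),
            HasDerivAt (fun t => ek t • Xint t)
              (ek t • x t + (-Complex.I * (k:ℂ) * ek t) • Xint t) t := by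
          intro t _
          exact (ek_hasDerivAt k t).smul (hXd t)
        have hint : IntervalIntegrable
            (fun t => ek t • x t + (-Complex.I * (k:ℂ) * ek t) • Xint t) volume 0 (2*Real.pi) := by
          exact Continuous.intervalIntegrable
            ((hekc.smul hxc).add ((continuous_const.mul hekc).smul hXc)) _ _
        have h2 := intervalIntegral.integral_eq_sub_of_hasDerivAt hder hint
        have h3 : ek (2*Real.pi) • Xint (2*Real.pi) - ek 0 • Xint 0 = Xint (2*Real.pi) := by
          have he1 : ek (2*Real.pi) = 1 := ek_two_pi k
          have he2 : Xint (0:ℝ) = 0 := intervalIntegral.integral_same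
          rw [he1, he2, one_smul, smul_zero, sub_zero]
        rw [h3] at h2
        have h4 : ∀ t : ℝ, (-Complex.I * (k:ℂ) * ek t) • Xint t
            = (-(Complex.I * (k:ℂ))) • (ek t • Xint t) := by
          intro t
          rw [← mul_smul]
          ring_nf
        rw [intervalIntegral.integral_congr (fun t _ => by rw [h4 t])] at h2
        rw [intervalIntegral.integral_add (f := fun t => ek t • x t) (g := fun t => (-(Complex.I * (k:ℂ))) • (ek t • Xint t))
          ((Continuous.intervalIntegrable (hekc.smul hxc) _ _))
          ((Continuous.intervalIntegrable
            ((continuous_const.smul (hekc.smul hXc) : Continuous fun t =>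
              (-(Complex.I * (k:ℂ))) • (ek t • Xint t))) _ _))] at h2
        rw [intervalIntegral.integral_smul] at h2
        exact h2
      -- Fubini
      have hZeq : Z = (Complex.I * (k:ℂ))⁻¹ • (Cg - G (2*Real.pi)) :=
        fubini_ekG g hgint k hk
      -- membership
      have hCxeq : Cx = Xint (2*Real.pi) + (Complex.I * (k:ℂ)) • J := by
        rw [← hIBP, neg_smul]
        abel
      have hCxD : Cx ∈ D := by
        rw [hCxeq]
        exact D.add_mem hXI (D.smul_mem _ hJ)
      refine ⟨hCxD, ?_⟩
      -- compute A ⟨Cx, hCxD⟩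
      have hsub : (⟨Cx, hCxD⟩ : D) = ⟨Xint (2*Real.pi), hXI⟩ + (Complex.I * (k:ℂ)) • ⟨J, hJ⟩ := by
        apply Subtype.ext
        rw [Submodule.coe_add, Submodule.coe_smul]
        exact hCxeq
      have hACx : A ⟨Cx, hCxD⟩ = -G (2*Real.pi) + (Complex.I * (k:ℂ)) • (Cx - Z) := by
        rw [hsub, map_add, _root_.map_smul, hA2π, hAJ, hW]
      rw [hACx, hZeq]
      rw [smul_sub, smul_smul, mul_inv_cancel₀ hIkne, one_smul]
      abel
  -- compute Cg
  have hCgeq : Cg = (∑ j, Complex.exp (-Complex.I * (k:ℂ) * ((r j : ℝ) : ℂ)) • B Cx) + Cf := by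
    have h1 : ∀ t : ℝ, ek t • g t = (∑ j, ek t • B (x (t - r j))) + ek t • f t := by
      intro t
      rw [hgdef]
      simp only [smul_add, Finset.smul_sum]
    have hcongr : Cg = ∫ t in (0:ℝ)..(2*Real.pi), ((∑ j, ek t • B (x (t - r j))) + ek t • f t) :=
      intervalIntegral.integral_congr (fun t _ => h1 t)
    rw [hcongr]
    rw [intervalIntegral.integral_add
      (Continuous.intervalIntegrable (by
        apply continuous_finset_sum
        intro j _
        exact hekc.smul (B.continuous.comp (hxc.comp (continuous_sub_right (r j))))) _ _)
      hekfII]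
    congr 1
    rw [intervalIntegral.integral_finset_sum]
    swap
    · intro j _
      exact Continuous.intervalIntegrable (hekc.smul (B.continuous.comp (hxc.comp (continuous_sub_right (r j))))) _ _
    apply Finset.sum_congr rfl
    intro j _
    exact shift_integral B x hxc hxper k (r j)
  -- final assembly
  obtain ⟨hCxD, hkey⟩ := hKey
  have hxk : fourierCoef x k = (1 / (2 * (Real.pi:ℂ))) • Cx := rfl
  have hfk : fourierCoef f k = (1 / (2 * (Real.pi:ℂ))) • Cf := rfl
  rw [hxk, hfk]
  refine ⟨D.smul_mem _ hCxD, ?_⟩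
  have hAsm : A ⟨(1 / (2 * (Real.pi:ℂ))) • Cx, D.smul_mem _ hCxD⟩
      = (1 / (2 * (Real.pi:ℂ))) • A ⟨Cx, hCxD⟩ := by
    have : (⟨(1 / (2 * (Real.pi:ℂ))) • Cx, D.smul_mem _ hCxD⟩ : D)
        = (1 / (2 * (Real.pi:ℂ))) • ⟨Cx, hCxD⟩ := by
      apply Subtype.ext
      rw [Submodule.coe_smul]
    rw [this, _root_.map_smul]
  rw [hAsm]
  have hBsm : ∀ j : Fin n, B ((1 / (2 * (Real.pi:ℂ))) • Cx) = (1 / (2 * (Real.pi:ℂ))) • B Cx :=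
    fun j => _root_.map_smul B _ _
  calc (Complex.I * (k:ℂ)) • (1 / (2 * (Real.pi:ℂ))) • Cx
        - (1 / (2 * (Real.pi:ℂ))) • A ⟨Cx, hCxD⟩
        - ∑ j, Complex.exp (-Complex.I * (k:ℂ) * ((r j : ℝ):ℂ)) • B ((1 / (2 * (Real.pi:ℂ))) • Cx)
      = (1 / (2 * (Real.pi:ℂ))) • ((Complex.I * (k:ℂ)) • Cx - A ⟨Cx, hCxD⟩
          - ∑ j, Complex.exp (-Complex.I * (k:ℂ) * ((r j : ℝ):ℂ)) • B Cx) := by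
        rw [smul_sub, smul_sub, smul_comm]
        congr 2
        rw [Finset.smul_sum]
        apply Finset.sum_congr rfl
        intro j _
        rw [hBsm j, smul_comm]
    _ = (1 / (2 * (Real.pi:ℂ))) • Cf := by
        congr 1
        rw [hkey, hCgeq]
        abel


end
end

section
/- Let X be a complex Banach space, 1 ≤ p < ∞, A a closed linear operator on X with domain D(A), B a bounded linear operator on X, and r_1,…,r_n real numbers. Assume that for every k ∈ ℤ the operator Δ_k = ikI − A − Σ_{j=1}^n e^{−ikr_j} B : D(A) → X is bijective with bounded inverse, and that for every f ∈ L^p(𝕋;X) there exists a 2π-periodic continuous function x : ℝ → X with ∫₀^t x(s) ds ∈ D(A) for all t ∈ [0,2π] and x(t) = x(0) + A∫₀^t x(s) ds + ∫₀^t ( Σ_{j=1}^n B x(s − r_j) + f(s) ) ds for all t ∈ [0,2π]. Then the sequence {Δ_k^{−1}}_{k∈ℤ} is an L^p-multiplier. -/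
open MeasureTheory Real Complex Filter Finset intervalIntegral
open scoped ENNReal NNReal

noncomputable section

namespace Stmt11


lemma periodic_continuous_aux {X : Type*} [TopologicalSpace X] {x : ℝ → X} {T : ℝ}
    (hper : Function.Periodic x T) (hT : 0 < T)
    (hc : ContinuousOn x (Set.Icc 0 T)) : Continuous x := by
  have hc' : ContinuousOn x (Set.Icc (-T) 0) := by
    have : ∀ s ∈ Set.Icc (-T) 0, x s = x (s + T) := fun s _ => (hper s).symm
    refine ContinuousOn.congr ?_ this
    refine ContinuousOn.comp hc (by fun_prop) ?_
    intro s hs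
    simp only [Set.mem_Icc] at hs ⊢
    constructor <;> [linarith [hs.1]; linarith [hs.2]]
  have hcc : ContinuousOn x (Set.Icc (-T) T) := by
    rw [← Set.Icc_union_Icc_eq_Icc (by linarith : -T ≤ 0) hT.le]
    intro y hy
    rcases hy with hy | hy
    · refine ContinuousWithinAt.union (hc' y hy) ?_
      rcases eq_or_lt_of_le hy.2 with h0 | h0
      · exact hc y (by rw [h0]; exact ⟨le_refl 0, hT.le⟩)
      · refine continuousWithinAt_of_notMem_closure ?_
        rw [IsClosed.closure_eq isClosed_Icc]
        intro h; exact absurd h.1 (not_le.2 h0)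
    · refine ContinuousWithinAt.union ?_ (hc y hy)
      rcases eq_or_lt_of_le hy.1 with h0 | h0
      · exact hc' y (by rw [← h0]; exact ⟨by linarith, le_refl 0⟩)
      · refine continuousWithinAt_of_notMem_closure ?_
        rw [IsClosed.closure_eq isClosed_Icc]
        intro h; exact absurd h.2 (not_le.2 h0)
  rw [continuous_iff_continuousAt]
  intro t
  set n : ℤ := ⌊t / T⌋ with hn
  have h1 : (n : ℝ) ≤ t / T := Int.floor_le _
  have h2 : t / T < n + 1 := Int.lt_floor_add_one _
  have hb1 : (n : ℝ) * T ≤ t := by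
    have := (le_div_iff₀ hT).1 h1; linarith
  have hb2 : t < n * T + T := by
    have := (div_lt_iff₀ hT).1 h2; linarith
  have hxeq : x = fun s => x (s - n * T) := by
    funext s; exact (hper.sub_int_mul_eq n).symm
  rw [hxeq]
  have hmem : t - n * T ∈ Set.Ioo (-T) T := ⟨by linarith, by linarith⟩
  have hca : ContinuousAt x (t - n * T) := by
    refine ContinuousWithinAt.continuousAt (hcc _ (Set.Ioo_subset_Icc_self hmem)) ?_
    exact Icc_mem_nhds hmem.1 hmem.2
  exact ContinuousAt.comp' hca (by fun_prop)

lemma exp_smul_periodic {X : Type*} [NormedAddCommGroup X] [NormedSpace ℂ X]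
    {x : ℝ → X} (hper : Function.Periodic x (2 * Real.pi)) (k : ℤ) :
    Function.Periodic (fun t : ℝ => Complex.exp (-Complex.I * (k : ℂ) * (t : ℂ)) • x t)
      (2 * Real.pi) := by
  intro t
  simp only [hper t]
  congr 1
  push_cast
  rw [mul_add, Complex.exp_add]
  have h1 : Complex.exp (-Complex.I * (k : ℂ) * (2 * Real.pi)) = 1 := by
    have := Complex.exp_int_mul_two_pi_mul_I (-k)
    rw [← this]
    congr 1
    push_cast
    ring
  rw [h1, mul_one]

lemma exp_norm_one (k : ℤ) (t : ℝ) :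
    ‖Complex.exp (-Complex.I * (k : ℂ) * (t : ℂ))‖ = 1 := by
  rw [Complex.norm_exp]
  have : (-Complex.I * (k : ℂ) * (t : ℂ)).re = 0 := by
    simp [Complex.mul_re, Complex.mul_im]
  rw [this, Real.exp_zero]

lemma exp_cont (k : ℤ) :
    Continuous (fun t : ℝ => Complex.exp (-Complex.I * (k : ℂ) * (t : ℂ))) := by
  fun_prop

lemma expSmul_intervalIntegrable {X : Type*} [NormedAddCommGroup X] [NormedSpace ℂ X]
    {y : ℝ → X} (h : IntegrableOn y (Set.Ioc 0 (2 * Real.pi))) (k : ℤ) :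
    IntervalIntegrable (fun s : ℝ => Complex.exp (-Complex.I * (k : ℂ) * (s : ℂ)) • y s)
      volume 0 (2 * Real.pi) := by
  rw [intervalIntegrable_iff, Set.uIoc_of_le (by positivity)]
  have hb : MemLp (fun s : ℝ => Complex.exp (-Complex.I * (k : ℂ) * (s : ℂ))) ⊤
      (volume.restrict (Set.Ioc 0 (2 * Real.pi))) := by
    refine memLp_top_of_bound ((exp_cont k).aestronglyMeasurable) 1 ?_
    exact Eventually.of_forall fun s => le_of_eq (exp_norm_one k s)
  exact Integrable.smul_of_top_right h hb

lemma intervalIntegrable_of_Ioc {X : Type*} [NormedAddCommGroup X]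
    {y : ℝ → X} (h : IntegrableOn y (Set.Ioc 0 (2 * Real.pi))) :
    IntervalIntegrable y volume 0 (2 * Real.pi) := by
  rw [intervalIntegrable_iff, Set.uIoc_of_le (by positivity)]
  exact h

lemma fourierCoef_add {X : Type*} [NormedAddCommGroup X] [NormedSpace ℂ X] [CompleteSpace X]
    {y1 y2 : ℝ → X} (h1 : IntegrableOn y1 (Set.Ioc 0 (2 * Real.pi)))
    (h2 : IntegrableOn y2 (Set.Ioc 0 (2 * Real.pi))) (k : ℤ) :
    fourierCoef (fun s => y1 s + y2 s) k = fourierCoef y1 k + fourierCoef y2 k := by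
  unfold fourierCoef
  rw [← smul_add, ← intervalIntegral.integral_add (expSmul_intervalIntegrable h1 k)
    (expSmul_intervalIntegrable h2 k)]
  congr 1
  refine intervalIntegral.integral_congr fun s _ => ?_
  simp [smul_add]

lemma fourierCoef_clm {X : Type*} [NormedAddCommGroup X] [NormedSpace ℂ X] [CompleteSpace X]
    {y : ℝ → X} (B : X →L[ℂ] X) (h : IntegrableOn y (Set.Ioc 0 (2 * Real.pi))) (k : ℤ) :
    fourierCoef (fun s => B (y s)) k = B (fourierCoef y k) := by
  unfold fourierCoef
  rw [ContinuousLinearMap.map_smul]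
  congr 1
  rw [← ContinuousLinearMap.intervalIntegral_comp_comm B (expSmul_intervalIntegrable h k)]
  refine intervalIntegral.integral_congr fun s _ => ?_
  simp [_root_.map_smul]

lemma fourierCoef_finset_sum {X : Type*} [NormedAddCommGroup X] [NormedSpace ℂ X]
    [CompleteSpace X] {n : ℕ} {y : Fin n → ℝ → X}
    (h : ∀ j, IntegrableOn (y j) (Set.Ioc 0 (2 * Real.pi))) (k : ℤ) :
    fourierCoef (fun s => ∑ j, y j s) k = ∑ j, fourierCoef (y j) k := by
  unfold fourierCoef
  rw [← Finset.smul_sum, ← intervalIntegral.integral_finset_sum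
    (fun j _ => expSmul_intervalIntegrable (h j) k)]
  congr 1
  refine intervalIntegral.integral_congr fun s _ => ?_
  simp [Finset.smul_sum]

lemma fourier_shift {X : Type*} [NormedAddCommGroup X] [NormedSpace ℂ X] [CompleteSpace X]
    {x : ℝ → X} (hper : Function.Periodic x (2 * Real.pi)) (k : ℤ) (r : ℝ) :
    fourierCoef (fun s => x (s - r)) k
      = Complex.exp (-Complex.I * (k : ℂ) * (r : ℂ)) • fourierCoef x k := by
  unfold fourierCoef
  rw [smul_comm]
  congr 1
  have h1 : (fun s : ℝ => Complex.exp (-Complex.I * (k : ℂ) * (s : ℂ)) • x (s - r))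
      = fun s : ℝ => (fun u : ℝ => Complex.exp (-Complex.I * (k : ℂ) * ((u : ℂ) + (r : ℂ))) • x u) (s - r) := by
    funext s
    simp only [sub_add_cancel]
    congr 2
    push_cast
    ring
  rw [h1, intervalIntegral.integral_comp_sub_right
    (fun u : ℝ => Complex.exp (-Complex.I * (k : ℂ) * ((u : ℂ) + (r : ℂ))) • x u) r]
  have h2 : ∀ u : ℝ, Complex.exp (-Complex.I * (k : ℂ) * ((u : ℂ) + (r : ℂ)))
      = Complex.exp (-Complex.I * (k : ℂ) * (r : ℂ)) * Complex.exp (-Complex.I * (k : ℂ) * (u : ℂ)) := by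
    intro u
    rw [← Complex.exp_add]
    congr 1
    ring
  simp only [h2, mul_smul]
  rw [intervalIntegral.integral_smul]
  congr 1
  rw [show (0:ℝ) - r = -r by ring, show 2 * Real.pi - r = -r + 2 * Real.pi by ring]
  have := (exp_smul_periodic hper k).intervalIntegral_add_eq (-r) 0
  simpa using this

lemma triangle_swap {X : Type*} [NormedAddCommGroup X] [NormedSpace ℂ X] [CompleteSpace X]
    {b : ℝ} (hb : 0 ≤ b) {φ : ℝ → ℂ} (hφ : Continuous φ) {f : ℝ → X}
    (hf : IntegrableOn f (Set.Ioc 0 b)) :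
    ∫ t in (0:ℝ)..b, φ t • (∫ s in (0:ℝ)..t, f s)
      = ∫ s in (0:ℝ)..b, (∫ t in s..b, φ t) • f s := by
  set μ := volume.restrict (Set.Ioc 0 b) with hμ
  set F : ℝ → ℝ → X := fun t s => Set.indicator (Set.Ici s) (fun t' => φ t' • f s) t with hF
  have hG : Integrable (fun p : ℝ × ℝ => φ p.1 • f p.2) (μ.prod μ) :=
    Integrable.smul_prod (hφ.integrableOn_Ioc) hf
  have hS : MeasurableSet {p : ℝ × ℝ | p.2 ≤ p.1} :=
    (isClosed_le continuous_snd continuous_fst).measurableSet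
  have hFi : Integrable (Function.uncurry F) (μ.prod μ) := by
    have : Function.uncurry F = Set.indicator {p : ℝ × ℝ | p.2 ≤ p.1}
        (fun p : ℝ × ℝ => φ p.1 • f p.2) := by
      funext p
      simp only [Function.uncurry, hF, Set.indicator, Set.mem_setOf_eq, Set.mem_Ici]
    rw [this]
    exact hG.indicator hS
  have hL : ∫ t in (0:ℝ)..b, φ t • (∫ s in (0:ℝ)..t, f s) = ∫ t, (∫ s, F t s ∂μ) ∂μ := by
    rw [intervalIntegral.integral_of_le hb]
    refine setIntegral_congr_fun measurableSet_Ioc ?_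
    intro t ht
    show φ t • (∫ s in (0:ℝ)..t, f s) = ∫ s, F t s ∂μ
    have h1 : ∫ s, F t s ∂μ = ∫ s in Set.Ioc 0 b ∩ Set.Iic t, φ t • f s := by
      rw [hμ]
      rw [show (fun s => F t s) = fun s => (Set.Iic t).indicator (fun s' => φ t • f s') s by
        funext s
        simp only [hF, Set.indicator, Set.mem_Iic, Set.mem_Ici]]
      exact MeasureTheory.setIntegral_indicator measurableSet_Iic
    have h2 : Set.Ioc 0 b ∩ Set.Iic t = Set.Ioc 0 t := by
      ext s
      simp only [Set.mem_inter_iff, Set.mem_Ioc, Set.mem_Iic]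
      constructor
      · rintro ⟨⟨h3, _⟩, h5⟩; exact ⟨h3, h5⟩
      · rintro ⟨h3, h4⟩; exact ⟨⟨h3, h4.trans ht.2⟩, h4⟩
    rw [h1, h2, intervalIntegral.integral_of_le ht.1.le, MeasureTheory.integral_smul]
  have hR : ∫ s in (0:ℝ)..b, (∫ t in s..b, φ t) • f s = ∫ s, (∫ t, F t s ∂μ) ∂μ := by
    rw [intervalIntegral.integral_of_le hb]
    refine setIntegral_congr_fun measurableSet_Ioc ?_
    intro s hs
    show (∫ t in s..b, φ t) • f s = ∫ t, F t s ∂μ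
    have h1 : ∫ t, F t s ∂μ = ∫ t in Set.Ioc 0 b ∩ Set.Ici s, φ t • f s := by
      rw [hμ]
      exact MeasureTheory.setIntegral_indicator measurableSet_Ici
    have h2 : Set.Ioc 0 b ∩ Set.Ici s = Set.Icc s b := by
      ext t
      simp only [Set.mem_inter_iff, Set.mem_Ioc, Set.mem_Ici, Set.mem_Icc]
      constructor
      · rintro ⟨⟨_, h4⟩, h5⟩; exact ⟨h5, h4⟩
      · rintro ⟨h3, h4⟩; exact ⟨⟨lt_of_lt_of_le hs.1 h3, h4⟩, h3⟩
    rw [h1, h2, _root_.integral_smul_const,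
      MeasureTheory.integral_Icc_eq_integral_Ioc, ← intervalIntegral.integral_of_le hs.2]
  rw [hL, hR]
  exact MeasureTheory.integral_integral_swap hFi

lemma exp_two_pi (k : ℤ) :
    Complex.exp (-Complex.I * (k : ℂ) * ((2 * Real.pi : ℝ) : ℂ)) = 1 := by
  have := Complex.exp_int_mul_two_pi_mul_I (-k)
  rw [← this]
  congr 1
  push_cast
  ring

lemma parts_aux {X : Type*} [NormedAddCommGroup X] [NormedSpace ℂ X] [CompleteSpace X]
    {k : ℤ} (hk : k ≠ 0) {y : ℝ → X} (hy : IntegrableOn y (Set.Ioc 0 (2 * Real.pi))) :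
    ∫ t in (0:ℝ)..(2 * Real.pi), Complex.exp (-Complex.I * (k : ℂ) * (t : ℂ)) •
        (∫ s in (0:ℝ)..t, y s)
      = (Complex.I * (k : ℂ))⁻¹ •
        ((∫ t in (0:ℝ)..(2 * Real.pi), Complex.exp (-Complex.I * (k : ℂ) * (t : ℂ)) • y t)
          - ∫ s in (0:ℝ)..(2 * Real.pi), y s) := by
  have hkc : ((k : ℂ)) ≠ 0 := Int.cast_ne_zero.2 hk
  have hι : Complex.I * (k : ℂ) ≠ 0 := mul_ne_zero Complex.I_ne_zero hkc
  have hc0 : -Complex.I * (k : ℂ) ≠ 0 := by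
    simpa [neg_mul] using neg_ne_zero.2 hι
  rw [triangle_swap (by positivity) (exp_cont k) hy]
  have hval : ∀ s ∈ Set.uIcc (0:ℝ) (2 * Real.pi),
      (fun s => (∫ t in s..(2 * Real.pi), Complex.exp (-Complex.I * (k : ℂ) * (t : ℂ))) • y s) s
        = (fun s : ℝ => (Complex.I * (k : ℂ))⁻¹ •
            (Complex.exp (-Complex.I * (k : ℂ) * (s : ℂ)) • y s - y s)) s := by
    intro s _
    show (∫ t in s..(2 * Real.pi), Complex.exp (-Complex.I * (k : ℂ) * (t : ℂ))) • y s
        = (Complex.I * (k : ℂ))⁻¹ • (Complex.exp (-Complex.I * (k : ℂ) * (s : ℂ)) • y s - y s)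
    rw [integral_exp_mul_complex hc0, exp_two_pi k]
    rw [show (1 - Complex.exp (-Complex.I * (k : ℂ) * (s : ℂ))) / (-Complex.I * (k : ℂ))
        = (Complex.I * (k : ℂ))⁻¹ * (Complex.exp (-Complex.I * (k : ℂ) * (s : ℂ)) - 1) by
      field_simp
      ring]
    rw [mul_smul, sub_smul, one_smul]
  rw [intervalIntegral.integral_congr hval]
  rw [intervalIntegral.integral_smul, intervalIntegral.integral_sub
    (expSmul_intervalIntegrable hy k) (intervalIntegrable_of_Ioc hy)]


end Stmt11

/-- If every `Δ_k = ikI - A - Σ_j e^{-ikr_j} B : D(A) → X` is bijective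
with bounded inverse `R k`, and every `f ∈ L^p(𝕋; X)` admits a `2π`-periodic mild solution
(in the integrated sense), then `{Δ_k⁻¹}_{k∈ℤ}` is an `L^p`-multiplier. -/

theorem mild_solvability_implies_multiplier {X : Type*}
    [NormedAddCommGroup X] [NormedSpace ℂ X] [CompleteSpace X]
    (p : ℝ≥0∞) (hp1 : 1 ≤ p) (hp2 : p < ⊤)
    (D : Submodule ℂ X) (A : D →ₗ[ℂ] X) (hA : IsClosedOp D A)
    (B : X →L[ℂ] X) (n : ℕ) (r : Fin n → ℝ)
    (R : ℤ → (X →L[ℂ] X))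
    (hRmem : ∀ (k : ℤ) (z : X), R k z ∈ D)
    (hRright : ∀ (k : ℤ) (z : X), (Complex.I * (k : ℂ)) • R k z - A ⟨R k z, hRmem k z⟩
      - ∑ j, Complex.exp (-Complex.I * (k : ℂ) * (r j : ℂ)) • B (R k z) = z)
    (hRleft : ∀ (k : ℤ) (y : D), R k ((Complex.I * (k : ℂ)) • (y : X) - A y
      - ∑ j, Complex.exp (-Complex.I * (k : ℂ) * (r j : ℂ)) • B (y : X)) = (y : X))
    (hsol : ∀ f : ℝ → X, PeriodicLp p f →
      ∃ x : ℝ → X, Function.Periodic x (2 * Real.pi) ∧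
        ContinuousOn x (Set.Icc 0 (2 * Real.pi)) ∧
        ∃ hxmem : ∀ t ∈ Set.Icc (0:ℝ) (2 * Real.pi), (∫ s in (0:ℝ)..t, x s) ∈ D,
          ∀ t : ℝ, ∀ ht : t ∈ Set.Icc (0:ℝ) (2 * Real.pi),
            x t = x 0 + A ⟨∫ s in (0:ℝ)..t, x s, hxmem t ht⟩
              + ∫ s in (0:ℝ)..t, ((∑ j, B (x (s - r j))) + f s)) :
    IsLpMultiplier p R := by
  intro f hf
  obtain ⟨hfper, hfLp⟩ := hf
  have hπ : (0:ℝ) < 2 * Real.pi := by positivity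
  have hfi : IntegrableOn f (Set.Ioc 0 (2 * Real.pi)) := hfLp.integrable hp1
  obtain ⟨x, hxper, hxconOn, hxmem, heq⟩ := hsol f ⟨hfper, hfLp⟩
  have hxc : Continuous x := Stmt11.periodic_continuous_aux hxper hπ hxconOn
  have hxi : IntegrableOn x (Set.Ioc 0 (2 * Real.pi)) := hxc.integrableOn_Ioc
  set g : ℝ → X := fun s => (∑ j, B (x (s - r j))) + f s with hgdef
  have hBxc : Continuous (fun s : ℝ => ∑ j, B (x (s - r j))) := by
    refine continuous_finset_sum _ fun j _ => ?_
    exact B.continuous.comp (hxc.comp (by fun_prop))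
  have hgi : IntegrableOn g (Set.Ioc 0 (2 * Real.pi)) := hBxc.integrableOn_Ioc.add hfi
  have h2mem : (2 * Real.pi) ∈ Set.Icc (0:ℝ) (2 * Real.pi) := ⟨by positivity, le_refl _⟩
  have hx2 : x (2 * Real.pi) = x 0 := by simpa using hxper 0
  have hAeq : ∀ t (ht : t ∈ Set.Icc (0:ℝ) (2 * Real.pi)),
      A ⟨∫ s in (0:ℝ)..t, x s, hxmem t ht⟩ = x t - x 0 - ∫ s in (0:ℝ)..t, g s := by
    intro t ht
    have h := heq t ht
    rw [h]
    abel
  have hZA : A ⟨∫ s in (0:ℝ)..(2 * Real.pi), x s, hxmem _ h2mem⟩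
      = -(∫ s in (0:ℝ)..(2 * Real.pi), g s) := by
    rw [hAeq _ h2mem, hx2]
    abel
  have hshift : ∀ j : Fin n, IntegrableOn (fun s : ℝ => B (x (s - r j)))
      (Set.Ioc 0 (2 * Real.pi)) := fun j =>
    (B.continuous.comp (hxc.comp (by fun_prop))).integrableOn_Ioc
  have hgcoef : ∀ k : ℤ, fourierCoef g k
      = (∑ j, Complex.exp (-Complex.I * (k : ℂ) * (r j : ℂ)) • B (fourierCoef x k))
        + fourierCoef f k := by
    intro k
    rw [hgdef]
    rw [Stmt11.fourierCoef_add hBxc.integrableOn_Ioc hfi k]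
    congr 1
    rw [Stmt11.fourierCoef_finset_sum (fun j => hshift j) k]
    refine Finset.sum_congr rfl fun j _ => ?_
    have hxsh : IntegrableOn (fun s : ℝ => x (s - r j)) (Set.Ioc 0 (2 * Real.pi)) :=
      (hxc.comp (by fun_prop : Continuous fun s : ℝ => s - r j)).integrableOn_Ioc
    rw [Stmt11.fourierCoef_clm B hxsh k]
    rw [Stmt11.fourier_shift hxper k (r j), B.map_smul]
  refine ⟨x, ⟨hxper, ?_⟩, ?_⟩
  · obtain ⟨C, hC⟩ := isCompact_Icc.exists_bound_of_continuousOn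
      (hxc.continuousOn (s := Set.Icc (0:ℝ) (2 * Real.pi)))
    refine MemLp.of_bound hxc.aestronglyMeasurable.restrict C ?_
    filter_upwards [ae_restrict_mem measurableSet_Ioc] with s hs
    exact hC s (Set.Ioc_subset_Icc_self hs)
  intro k
  by_cases hk : k = 0
  · subst hk
    have hx0coef : fourierCoef x 0 = (1 / (2 * (Real.pi : ℂ))) •
        ∫ s in (0:ℝ)..(2 * Real.pi), x s := by
      unfold fourierCoef
      congr 1
      refine intervalIntegral.integral_congr fun s _ => ?_
      simp
    have hcmem : fourierCoef x 0 ∈ D := by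
      rw [hx0coef]; exact D.smul_mem _ (hxmem _ h2mem)
    have hsub : (⟨fourierCoef x 0, hcmem⟩ : D)
        = (1 / (2 * (Real.pi : ℂ))) • (⟨∫ s in (0:ℝ)..(2 * Real.pi), x s, hxmem _ h2mem⟩ : D) :=
      Subtype.ext hx0coef
    have hAc : A ⟨fourierCoef x 0, hcmem⟩
        = -((1 / (2 * (Real.pi : ℂ))) • ∫ s in (0:ℝ)..(2 * Real.pi), g s) := by
      rw [hsub, A.map_smul, hZA, smul_neg]
    have hg0 : fourierCoef g 0 = (1 / (2 * (Real.pi : ℂ))) •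
        ∫ s in (0:ℝ)..(2 * Real.pi), g s := by
      unfold fourierCoef
      congr 1
      refine intervalIntegral.integral_congr fun s _ => ?_
      simp
    have h1 : R 0 ((Complex.I * ((0:ℤ) : ℂ)) • (fourierCoef x 0)
        - A ⟨fourierCoef x 0, hcmem⟩
        - ∑ j, Complex.exp (-Complex.I * ((0:ℤ) : ℂ) * (r j : ℂ)) • B (fourierCoef x 0))
        = fourierCoef x 0 := hRleft 0 ⟨fourierCoef x 0, hcmem⟩
    rw [hAc] at h1
    simp only [Int.cast_zero, mul_zero, zero_mul, zero_smul, Complex.exp_zero, one_smul,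
      zero_sub, neg_neg] at h1
    have hg0' := hgcoef 0
    simp only [Int.cast_zero, mul_zero, zero_mul, Complex.exp_zero, one_smul] at hg0'
    conv_lhs => rw [← h1]
    congr 1
    rw [← hg0, hg0']
    abel
  · -- k ≠ 0
    have hkc : ((k : ℂ)) ≠ 0 := Int.cast_ne_zero.2 hk
    have hι : Complex.I * (k : ℂ) ≠ 0 := mul_ne_zero Complex.I_ne_zero hkc
    have hc0 : -Complex.I * (k : ℂ) ≠ 0 := by
      simpa [neg_mul] using neg_ne_zero.2 hι
    have hEc := Stmt11.exp_cont k
    have hXXc : Continuous (fun t : ℝ => ∫ s in (0:ℝ)..t, x s) :=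
      intervalIntegral.continuous_primitive (fun a b => hxc.intervalIntegrable a b) 0
    have hgii : IntervalIntegrable g volume 0 (2 * Real.pi) := Stmt11.intervalIntegrable_of_Ioc hgi
    have hGcon : ContinuousOn (fun t : ℝ => ∫ s in (0:ℝ)..t, g s)
        (Set.uIcc 0 (2 * Real.pi)) :=
      intervalIntegral.continuousOn_primitive_interval' hgii Set.left_mem_uIcc
    -- pointwise identity
    have hpt : Set.EqOn
        (fun t : ℝ => Complex.exp (-Complex.I * (k : ℂ) * (t : ℂ)) • (∫ s in (0:ℝ)..t, x s))
        (fun t : ℝ => (R k) ((Complex.I * (k : ℂ)) •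
              (Complex.exp (-Complex.I * (k : ℂ) * (t : ℂ)) • (∫ s in (0:ℝ)..t, x s))
            - Complex.exp (-Complex.I * (k : ℂ) * (t : ℂ)) • x t
            + Complex.exp (-Complex.I * (k : ℂ) * (t : ℂ)) • x 0
            + Complex.exp (-Complex.I * (k : ℂ) * (t : ℂ)) • (∫ s in (0:ℝ)..t, g s)
            - ∑ j, Complex.exp (-Complex.I * (k : ℂ) * (r j : ℂ)) •
                (Complex.exp (-Complex.I * (k : ℂ) * (t : ℂ)) • B (∫ s in (0:ℝ)..t, x s))))
        (Set.uIcc 0 (2 * Real.pi)) := by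
      intro t ht
      rw [Set.uIcc_of_le hπ.le] at ht
      have h1 : R k ((Complex.I * (k : ℂ)) • (∫ s in (0:ℝ)..t, x s)
          - A ⟨∫ s in (0:ℝ)..t, x s, hxmem t ht⟩
          - ∑ j, Complex.exp (-Complex.I * (k : ℂ) * (r j : ℂ)) • B (∫ s in (0:ℝ)..t, x s))
          = ∫ s in (0:ℝ)..t, x s := hRleft k ⟨∫ s in (0:ℝ)..t, x s, hxmem t ht⟩
    
      rw [hAeq t ht] at h1
      show Complex.exp (-Complex.I * (k : ℂ) * (t : ℂ)) • (∫ s in (0:ℝ)..t, x s) = _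
      conv_lhs => rw [← h1]
      rw [← (R k).map_smul]
      congr 1
      have hS : Complex.exp (-Complex.I * (k : ℂ) * (t : ℂ)) •
          (∑ j, Complex.exp (-Complex.I * (k : ℂ) * (r j : ℂ)) • B (∫ s in (0:ℝ)..t, x s))
          = ∑ j, Complex.exp (-Complex.I * (k : ℂ) * (r j : ℂ)) •
              (Complex.exp (-Complex.I * (k : ℂ) * (t : ℂ)) • B (∫ s in (0:ℝ)..t, x s)) := by
        rw [Finset.smul_sum]
        exact Finset.sum_congr rfl fun j _ => smul_comm _ _ _
      rw [smul_sub, hS]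
      congr 1
      module
    -- integrability pieces
    have hT1c : Continuous (fun t : ℝ => (Complex.I * (k : ℂ)) •
        (Complex.exp (-Complex.I * (k : ℂ) * (t : ℂ)) • (∫ s in (0:ℝ)..t, x s))) :=
      (hEc.smul hXXc).const_smul _
    have hT2c : Continuous (fun t : ℝ =>
        Complex.exp (-Complex.I * (k : ℂ) * (t : ℂ)) • x t) := hEc.smul hxc
    have hT3c : Continuous (fun t : ℝ =>
        Complex.exp (-Complex.I * (k : ℂ) * (t : ℂ)) • x 0) := hEc.smul continuous_const
    have hT5c : Continuous (fun t : ℝ => ∑ j,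
        Complex.exp (-Complex.I * (k : ℂ) * (r j : ℂ)) •
          (Complex.exp (-Complex.I * (k : ℂ) * (t : ℂ)) • B (∫ s in (0:ℝ)..t, x s))) :=
      continuous_finset_sum _ fun j _ => ((hEc.smul (B.continuous.comp hXXc)).const_smul _)
    have hG_EG : IntervalIntegrable (fun t : ℝ =>
        Complex.exp (-Complex.I * (k : ℂ) * (t : ℂ)) • (∫ s in (0:ℝ)..t, g s))
        volume 0 (2 * Real.pi) :=
      (ContinuousOn.smul hEc.continuousOn hGcon).intervalIntegrable
    have hintAB : IntervalIntegrable (fun t : ℝ =>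
        (Complex.I * (k : ℂ)) • (Complex.exp (-Complex.I * (k : ℂ) * (t : ℂ)) • (∫ s in (0:ℝ)..t, x s))
        - Complex.exp (-Complex.I * (k : ℂ) * (t : ℂ)) • x t
        + Complex.exp (-Complex.I * (k : ℂ) * (t : ℂ)) • x 0)
        volume 0 (2 * Real.pi) := ((hT1c.sub hT2c).add hT3c).intervalIntegrable _ _
    have hintC : IntervalIntegrable (fun t : ℝ =>
        (Complex.I * (k : ℂ)) • (Complex.exp (-Complex.I * (k : ℂ) * (t : ℂ)) • (∫ s in (0:ℝ)..t, x s))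
        - Complex.exp (-Complex.I * (k : ℂ) * (t : ℂ)) • x t
        + Complex.exp (-Complex.I * (k : ℂ) * (t : ℂ)) • x 0
        + Complex.exp (-Complex.I * (k : ℂ) * (t : ℂ)) • (∫ s in (0:ℝ)..t, g s))
        volume 0 (2 * Real.pi) := hintAB.add hG_EG
    have hintΦ : IntervalIntegrable (fun t : ℝ =>
        (Complex.I * (k : ℂ)) • (Complex.exp (-Complex.I * (k : ℂ) * (t : ℂ)) • (∫ s in (0:ℝ)..t, x s))
        - Complex.exp (-Complex.I * (k : ℂ) * (t : ℂ)) • x t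
        + Complex.exp (-Complex.I * (k : ℂ) * (t : ℂ)) • x 0
        + Complex.exp (-Complex.I * (k : ℂ) * (t : ℂ)) • (∫ s in (0:ℝ)..t, g s)
        - ∑ j, Complex.exp (-Complex.I * (k : ℂ) * (r j : ℂ)) •
            (Complex.exp (-Complex.I * (k : ℂ) * (t : ℂ)) • B (∫ s in (0:ℝ)..t, x s)))
        volume 0 (2 * Real.pi) := hintC.sub (hT5c.intervalIntegrable _ _)
    have hE0 : (∫ t in (0:ℝ)..(2 * Real.pi),
        Complex.exp (-Complex.I * (k : ℂ) * (t : ℂ))) = 0 := by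
      rw [integral_exp_mul_complex hc0, Stmt11.exp_two_pi k]
      simp
    -- the main integrated identity
    have hYmain : (∫ t in (0:ℝ)..(2 * Real.pi),
          Complex.exp (-Complex.I * (k : ℂ) * (t : ℂ)) • (∫ s in (0:ℝ)..t, x s))
        = R k ((Complex.I * (k : ℂ)) • (∫ t in (0:ℝ)..(2 * Real.pi),
              Complex.exp (-Complex.I * (k : ℂ) * (t : ℂ)) • (∫ s in (0:ℝ)..t, x s))
            - (∫ t in (0:ℝ)..(2 * Real.pi), Complex.exp (-Complex.I * (k : ℂ) * (t : ℂ)) • x t)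
            + (∫ t in (0:ℝ)..(2 * Real.pi),
                Complex.exp (-Complex.I * (k : ℂ) * (t : ℂ)) • (∫ s in (0:ℝ)..t, g s))
            - ∑ j, Complex.exp (-Complex.I * (k : ℂ) * (r j : ℂ)) •
                B (∫ t in (0:ℝ)..(2 * Real.pi),
                  Complex.exp (-Complex.I * (k : ℂ) * (t : ℂ)) • (∫ s in (0:ℝ)..t, x s))) := by
      conv_lhs => rw [intervalIntegral.integral_congr hpt]
      rw [ContinuousLinearMap.intervalIntegral_comp_comm (R k) hintΦ]
      congr 1
      rw [intervalIntegral.integral_sub hintC (hT5c.intervalIntegrable _ _),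
        intervalIntegral.integral_add hintAB hG_EG,
        intervalIntegral.integral_add ((hT1c.intervalIntegrable _ _).sub (hT2c.intervalIntegrable _ _))
          (hT3c.intervalIntegrable _ _),
        intervalIntegral.integral_sub (hT1c.intervalIntegrable _ _)
          (hT2c.intervalIntegrable _ _),
        intervalIntegral.integral_smul, intervalIntegral.integral_smul_const, hE0, zero_smul,
        add_zero]
      congr 1
      have hTjc : ∀ j : Fin n, IntervalIntegrable (fun t : ℝ =>
          Complex.exp (-Complex.I * (k : ℂ) * (r j : ℂ)) •
            (Complex.exp (-Complex.I * (k : ℂ) * (t : ℂ)) • B (∫ s in (0:ℝ)..t, x s)))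
          volume 0 (2 * Real.pi) := fun j =>
        (((hEc.smul (B.continuous.comp hXXc)).const_smul _).intervalIntegrable _ _)
      rw [intervalIntegral.integral_finset_sum (fun j _ => hTjc j)]
      refine Finset.sum_congr (rfl : (Finset.univ : Finset (Fin n)) = Finset.univ) fun j _ => ?_
      rw [intervalIntegral.integral_smul]
      congr 1
      rw [show (fun t : ℝ => Complex.exp (-Complex.I * (k : ℂ) * (t : ℂ)) •
          B (∫ s in (0:ℝ)..t, x s))
          = fun t : ℝ => B (Complex.exp (-Complex.I * (k : ℂ) * (t : ℂ)) •
            (∫ s in (0:ℝ)..t, x s)) from funext fun t => (B.map_smul _ _).symm]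
      exact ContinuousLinearMap.intervalIntegral_comp_comm B ((hEc.smul hXXc).intervalIntegrable _ _)
    -- integration by parts values
    have hYval := Stmt11.parts_aux hk hxi
    have hGval := Stmt11.parts_aux hk hgi
    have hiY : (Complex.I * (k : ℂ)) • (∫ t in (0:ℝ)..(2 * Real.pi),
          Complex.exp (-Complex.I * (k : ℂ) * (t : ℂ)) • (∫ s in (0:ℝ)..t, x s))
        = (∫ t in (0:ℝ)..(2 * Real.pi), Complex.exp (-Complex.I * (k : ℂ) * (t : ℂ)) • x t)
          - ∫ s in (0:ℝ)..(2 * Real.pi), x s := by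
      rw [hYval, smul_smul, mul_inv_cancel₀ hι, one_smul]
    -- endpoint identity
    have hend : (∫ s in (0:ℝ)..(2 * Real.pi), x s)
        = R k ((Complex.I * (k : ℂ)) • (∫ s in (0:ℝ)..(2 * Real.pi), x s)
            + (∫ s in (0:ℝ)..(2 * Real.pi), g s)
            - ∑ j, Complex.exp (-Complex.I * (k : ℂ) * (r j : ℂ)) •
                B (∫ s in (0:ℝ)..(2 * Real.pi), x s)) := by
      have h1 : R k ((Complex.I * (k : ℂ)) • (∫ s in (0:ℝ)..(2 * Real.pi), x s)
          - A ⟨∫ s in (0:ℝ)..(2 * Real.pi), x s, hxmem _ h2mem⟩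
          - ∑ j, Complex.exp (-Complex.I * (k : ℂ) * (r j : ℂ)) •
              B (∫ s in (0:ℝ)..(2 * Real.pi), x s))
          = ∫ s in (0:ℝ)..(2 * Real.pi), x s := hRleft k ⟨_, hxmem _ h2mem⟩
      rw [hZA, sub_neg_eq_add] at h1
      exact h1.symm
    -- combine
    have h6 := congrArg (fun v => (Complex.I * (k : ℂ)) • v) hYmain
    simp only [← (R k).map_smul] at h6
    rw [hiY] at h6
    rw [hGval] at h6
    -- h6 : Ix - Zx = R k (ι • W')
    have h9 : (∫ t in (0:ℝ)..(2 * Real.pi), Complex.exp (-Complex.I * (k : ℂ) * (t : ℂ)) • x t)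
        = R k (((Complex.I * (k : ℂ)) • (((∫ t in (0:ℝ)..(2 * Real.pi),
              Complex.exp (-Complex.I * (k : ℂ) * (t : ℂ)) • x t)
              - ∫ s in (0:ℝ)..(2 * Real.pi), x s)
            - (∫ t in (0:ℝ)..(2 * Real.pi), Complex.exp (-Complex.I * (k : ℂ) * (t : ℂ)) • x t)
            + (Complex.I * (k : ℂ))⁻¹ •
              ((∫ t in (0:ℝ)..(2 * Real.pi), Complex.exp (-Complex.I * (k : ℂ) * (t : ℂ)) • g t)
                - ∫ s in (0:ℝ)..(2 * Real.pi), g s)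
            - ∑ j, Complex.exp (-Complex.I * (k : ℂ) * (r j : ℂ)) •
                B (∫ t in (0:ℝ)..(2 * Real.pi),
                  Complex.exp (-Complex.I * (k : ℂ) * (t : ℂ)) • (∫ s in (0:ℝ)..t, x s))))
          + ((Complex.I * (k : ℂ)) • (∫ s in (0:ℝ)..(2 * Real.pi), x s)
            + (∫ s in (0:ℝ)..(2 * Real.pi), g s)
            - ∑ j, Complex.exp (-Complex.I * (k : ℂ) * (r j : ℂ)) •
                B (∫ s in (0:ℝ)..(2 * Real.pi), x s))) := by
      rw [(R k).map_add, ← h6, ← hend]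
      abel
    -- now simplify the argument of R k in h9
    have h10 : ((Complex.I * (k : ℂ)) • (((∫ t in (0:ℝ)..(2 * Real.pi),
              Complex.exp (-Complex.I * (k : ℂ) * (t : ℂ)) • x t)
              - ∫ s in (0:ℝ)..(2 * Real.pi), x s)
            - (∫ t in (0:ℝ)..(2 * Real.pi), Complex.exp (-Complex.I * (k : ℂ) * (t : ℂ)) • x t)
            + (Complex.I * (k : ℂ))⁻¹ •
              ((∫ t in (0:ℝ)..(2 * Real.pi), Complex.exp (-Complex.I * (k : ℂ) * (t : ℂ)) • g t)
                - ∫ s in (0:ℝ)..(2 * Real.pi), g s)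
            - ∑ j, Complex.exp (-Complex.I * (k : ℂ) * (r j : ℂ)) •
                B (∫ t in (0:ℝ)..(2 * Real.pi),
                  Complex.exp (-Complex.I * (k : ℂ) * (t : ℂ)) • (∫ s in (0:ℝ)..t, x s))))
          + ((Complex.I * (k : ℂ)) • (∫ s in (0:ℝ)..(2 * Real.pi), x s)
            + (∫ s in (0:ℝ)..(2 * Real.pi), g s)
            - ∑ j, Complex.exp (-Complex.I * (k : ℂ) * (r j : ℂ)) •
                B (∫ s in (0:ℝ)..(2 * Real.pi), x s))
        = (∫ t in (0:ℝ)..(2 * Real.pi), Complex.exp (-Complex.I * (k : ℂ) * (t : ℂ)) • g t)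
          - ∑ j, Complex.exp (-Complex.I * (k : ℂ) * (r j : ℂ)) •
              B (∫ t in (0:ℝ)..(2 * Real.pi), Complex.exp (-Complex.I * (k : ℂ) * (t : ℂ)) • x t) := by
      have hd1 : (Complex.I * (k : ℂ)) • (∑ j, Complex.exp (-Complex.I * (k : ℂ) * (r j : ℂ)) •
          B (∫ t in (0:ℝ)..(2 * Real.pi),
            Complex.exp (-Complex.I * (k : ℂ) * (t : ℂ)) • (∫ s in (0:ℝ)..t, x s)))
          = ∑ j, Complex.exp (-Complex.I * (k : ℂ) * (r j : ℂ)) •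
              B ((Complex.I * (k : ℂ)) • (∫ t in (0:ℝ)..(2 * Real.pi),
                Complex.exp (-Complex.I * (k : ℂ) * (t : ℂ)) • (∫ s in (0:ℝ)..t, x s))) := by
        rw [Finset.smul_sum]
        refine Finset.sum_congr rfl fun j _ => ?_
        rw [smul_comm, B.map_smul]
      rw [smul_sub, hd1, hiY]
      have hd2 : (∑ j, Complex.exp (-Complex.I * (k : ℂ) * (r j : ℂ)) •
          B ((∫ t in (0:ℝ)..(2 * Real.pi), Complex.exp (-Complex.I * (k : ℂ) * (t : ℂ)) • x t)
            - ∫ s in (0:ℝ)..(2 * Real.pi), x s))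
          = (∑ j, Complex.exp (-Complex.I * (k : ℂ) * (r j : ℂ)) •
              B (∫ t in (0:ℝ)..(2 * Real.pi), Complex.exp (-Complex.I * (k : ℂ) * (t : ℂ)) • x t))
            - ∑ j, Complex.exp (-Complex.I * (k : ℂ) * (r j : ℂ)) •
              B (∫ s in (0:ℝ)..(2 * Real.pi), x s) := by
        rw [← Finset.sum_sub_distrib]
        refine Finset.sum_congr rfl fun j _ => ?_
        rw [B.map_sub, smul_sub]
      rw [hd2]
      have hd3 : (Complex.I * (k : ℂ)) • ((Complex.I * (k : ℂ))⁻¹ •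
          ((∫ t in (0:ℝ)..(2 * Real.pi), Complex.exp (-Complex.I * (k : ℂ) * (t : ℂ)) • g t)
            - ∫ s in (0:ℝ)..(2 * Real.pi), g s))
          = (∫ t in (0:ℝ)..(2 * Real.pi), Complex.exp (-Complex.I * (k : ℂ) * (t : ℂ)) • g t)
            - ∫ s in (0:ℝ)..(2 * Real.pi), g s := by
        rw [smul_smul, mul_inv_cancel₀ hι, one_smul]
      rw [smul_add, smul_sub, smul_sub, hd3]
      module
    rw [h10] at h9
    -- conclude
    have hcoefx : fourierCoef x k = (1 / (2 * (Real.pi : ℂ))) •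
        ∫ t in (0:ℝ)..(2 * Real.pi), Complex.exp (-Complex.I * (k : ℂ) * (t : ℂ)) • x t := rfl
    have hcoefg : fourierCoef g k = (1 / (2 * (Real.pi : ℂ))) •
        ∫ t in (0:ℝ)..(2 * Real.pi), Complex.exp (-Complex.I * (k : ℂ) * (t : ℂ)) • g t := rfl
    rw [hcoefx, h9, ← (R k).map_smul]
    congr 1
    rw [smul_sub]
    rw [show (1 / (2 * (Real.pi : ℂ))) • (∑ j, Complex.exp (-Complex.I * (k : ℂ) * (r j : ℂ)) •
        B (∫ t in (0:ℝ)..(2 * Real.pi), Complex.exp (-Complex.I * (k : ℂ) * (t : ℂ)) • x t))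
        = ∑ j, Complex.exp (-Complex.I * (k : ℂ) * (r j : ℂ)) • B (fourierCoef x k) from by
      rw [Finset.smul_sum]
      refine Finset.sum_congr rfl fun j _ => ?_
      rw [hcoefx, B.map_smul, smul_comm]]
    rw [← hcoefg, hgcoef k]
    abel

end
end
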